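/- arXiv:2308.08604 — 6 statements merged into one kernel-verified Lean document; each statement's English description precedes it below -/
import Mathlib

section
/- Let n ≥ 2. Then the v-number of the edge ideal of the path graph P_n is given by v(P_n) = ⌊n/4⌋ if n ≡ 0 or 1 (mod 4), and v(P_n) = ⌊n/4⌋ + 1 if n ≡ 2 or 3 (mod 4). -/
open MvPolynomial

noncomputable section

/-- The `v`-number of a graded ideal `I ⊆ K[x_1,…,x_t]`: the least `k ≥ 0` such that there is a
homogeneous polynomial `f` of degree `k` with `(I : f)` an associated prime of `S/I`. -/
def vNumber {σ K : Type*} [Field K] (I : Ideal (MvPolynomial σ K)) : ℕ :=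
  sInf {k : ℕ | ∃ f : MvPolynomial σ K, f.IsHomogeneous k ∧
    Submodule.colon I (Ideal.span {f}) ∈
      associatedPrimes (MvPolynomial σ K) (MvPolynomial σ K ⧸ I)}

/-- The edge ideal of a simple graph: generated by `x_i * x_j` for edges `{x_i, x_j}`. -/
def edgeIdeal (K : Type*) [Field K] {V : Type*} (G : SimpleGraph V) :
    Ideal (MvPolynomial V K) :=
  Ideal.span {m | ∃ i j, G.Adj i j ∧ m = X i * X j}

/-- `I` is a monomial ideal: generated by a set of monomials. -/
def IsMonomialIdeal {σ K : Type*} [Field K] (I : Ideal (MvPolynomial σ K)) : Prop :=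
  ∃ A : Set (σ →₀ ℕ), I = Ideal.span ((fun a => (monomial a (1 : K))) '' A)

/-- The graded maximal ideal `𝔪 = ⟨x_1,…,x_t⟩`. -/
def maxIdeal (K : Type*) [Field K] (σ : Type*) : Ideal (MvPolynomial σ K) :=
  Ideal.span (Set.range (X : σ → MvPolynomial σ K))

/-- `α(I)`: the minimum degree of a nonzero element of `I`. -/
def alphaNumber {σ K : Type*} [Field K] (I : Ideal (MvPolynomial σ K)) : ℕ :=
  sInf {d : ℕ | ∃ f ∈ I, f ≠ 0 ∧ f.totalDegree = d}

/-- Exponent vectors of the minimal monomial generators of a monomial ideal `I`: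
monomials in `I` none of whose proper divisors lies in `I`. -/
def minimalGenerators {σ K : Type*} [Field K] (I : Ideal (MvPolynomial σ K)) :
    Set (σ →₀ ℕ) :=
  {a | (monomial a (1 : K)) ∈ I ∧
    ∀ b : σ →₀ ℕ, b ≤ a → b ≠ a → (monomial b (1 : K)) ∉ I}

lemma coeff_aeval_restrict {σ K : Type*} [Field K] (C : Set σ) [DecidablePred (· ∈ C)]
    (f : MvPolynomial σ K) (d : σ →₀ ℕ) (hd : ∀ i ∈ C, d i = 0) :
    coeff d (aeval (fun i => if i ∈ C then (0 : MvPolynomial σ K) else X i) f) = coeff d f := by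
  classical
  rw [aeval_def, eval₂_eq, coeff_sum]
  have hterm : ∀ e : σ →₀ ℕ, e ≠ d →
      coeff d ((algebraMap K (MvPolynomial σ K)) (f.coeff e) *
        ∏ i ∈ e.support, (if i ∈ C then (0 : MvPolynomial σ K) else X i) ^ e i) = 0 := by
    intro e hne
    by_cases hC : ∃ i ∈ e.support, i ∈ C
    · obtain ⟨i, hi, hiC⟩ := hC
      rw [Finset.prod_eq_zero hi (by
        rw [if_pos hiC]
        exact zero_pow (Finsupp.mem_support_iff.1 hi)), mul_zero, coeff_zero]
    · push_neg at hC
      have : ∏ i ∈ e.support, (if i ∈ C then (0 : MvPolynomial σ K) else X i) ^ e i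
          = ∏ i ∈ e.support, (X i : MvPolynomial σ K) ^ e i :=
        Finset.prod_congr rfl fun i hi => by rw [if_neg (hC i hi)]
      rw [this]
      have hmono : (algebraMap K (MvPolynomial σ K)) (f.coeff e) *
          ∏ i ∈ e.support, (X i : MvPolynomial σ K) ^ e i = monomial e (f.coeff e) := by
        rw [monomial_eq, Finsupp.prod, algebraMap_eq]
      rw [hmono, coeff_monomial, if_neg hne]
  by_cases hdf : d ∈ f.support
  · rw [Finset.sum_eq_single d (fun e _ hne => hterm e hne) (fun h => absurd hdf h)]
    have hd' : ∀ i ∈ d.support, i ∉ C := fun i hi hiC =>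
      (Finsupp.mem_support_iff.1 hi) (hd i hiC)
    have : ∏ i ∈ d.support, (if i ∈ C then (0 : MvPolynomial σ K) else X i) ^ d i
        = ∏ i ∈ d.support, (X i : MvPolynomial σ K) ^ d i :=
      Finset.prod_congr rfl fun i hi => by rw [if_neg (hd' i hi)]
    rw [this]
    have hmono : (algebraMap K (MvPolynomial σ K)) (f.coeff d) *
        ∏ i ∈ d.support, (X i : MvPolynomial σ K) ^ d i = monomial d (f.coeff d) := by
      rw [monomial_eq, Finsupp.prod, algebraMap_eq]
    rw [hmono, coeff_monomial, if_pos rfl]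
  · rw [Finset.sum_eq_zero (fun e he => hterm e (fun h => hdf (h ▸ he))),
      MvPolynomial.notMem_support_iff.1 hdf]

lemma span_X_isPrime {σ K : Type*} [Field K] (C : Set σ) :
    (Ideal.span (X '' C : Set (MvPolynomial σ K))).IsPrime := by
  classical
  have hker : Ideal.span (X '' C : Set (MvPolynomial σ K)) =
      RingHom.ker ((aeval (fun i => if i ∈ C then (0 : MvPolynomial σ K) else X i) :
        MvPolynomial σ K →ₐ[K] MvPolynomial σ K) : MvPolynomial σ K →+* MvPolynomial σ K) := by
    apply le_antisymm
    · rw [Ideal.span_le]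
      rintro _ ⟨i, hi, rfl⟩
      simp [RingHom.mem_ker, if_pos hi]
    · intro f hf
      by_contra hfs
      rw [mem_ideal_span_X_image] at hfs
      push_neg at hfs
      obtain ⟨d, hd, hdC⟩ := hfs
      have h1 := coeff_aeval_restrict C f d hdC
      rw [RingHom.mem_ker] at hf
      rw [show ((aeval (fun i => if i ∈ C then (0 : MvPolynomial σ K) else X i) :
        MvPolynomial σ K →ₐ[K] MvPolynomial σ K) : MvPolynomial σ K →+* MvPolynomial σ K) f
        = aeval (fun i => if i ∈ C then (0 : MvPolynomial σ K) else X i) f from rfl] at hf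
      rw [hf, coeff_zero] at h1
      exact (MvPolynomial.mem_support_iff.1 hd) h1.symm
  rw [hker]
  exact RingHom.ker_isPrime _

lemma X_mul_X {K V : Type*} [Field K] (i j : V) :
    (X i * X j : MvPolynomial V K) = monomial (Finsupp.single i 1 + Finsupp.single j 1) 1 := by
  rw [X, X, monomial_mul, one_mul]

lemma edgeIdeal_eq_span {K V : Type*} [Field K] (G : SimpleGraph V) :
    edgeIdeal K G = Ideal.span ((fun a => monomial a (1 : K)) ''
      {a | ∃ i j, G.Adj i j ∧ a = Finsupp.single i 1 + Finsupp.single j 1}) := by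
  unfold edgeIdeal
  congr 1
  ext m
  constructor
  · rintro ⟨i, j, hij, rfl⟩
    exact ⟨Finsupp.single i 1 + Finsupp.single j 1, ⟨i, j, hij, rfl⟩, (X_mul_X i j).symm⟩
  · rintro ⟨a, ⟨i, j, hij, rfl⟩, rfl⟩
    exact ⟨i, j, hij, (X_mul_X i j).symm⟩

lemma mem_edgeIdeal_iff {K V : Type*} [Field K] {G : SimpleGraph V} {f : MvPolynomial V K} :
    f ∈ edgeIdeal K G ↔ ∀ d ∈ f.support, ∃ i j, G.Adj i j ∧ d i ≠ 0 ∧ d j ≠ 0 := by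
  classical
  rw [edgeIdeal_eq_span, mem_ideal_span_monomial_image]
  refine forall₂_congr fun d _ => ⟨?_, ?_⟩
  · rintro ⟨a, ⟨i, j, hij, rfl⟩, hle⟩
    have hne : i ≠ j := hij.ne
    have hvi : (Finsupp.single i 1 + Finsupp.single j 1 : V →₀ ℕ) i = 1 := by
      rw [Finsupp.add_apply, Finsupp.single_eq_same, Finsupp.single_eq_of_ne' (Ne.symm hne)]
      rfl
    have hvj : (Finsupp.single i 1 + Finsupp.single j 1 : V →₀ ℕ) j = 1 := by
      rw [Finsupp.add_apply, Finsupp.single_eq_same, Finsupp.single_eq_of_ne' hne]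
    have hi := Finsupp.le_def.1 hle i
    have hj := Finsupp.le_def.1 hle j
    rw [hvi] at hi
    rw [hvj] at hj
    exact ⟨i, j, hij, by omega, by omega⟩
  · rintro ⟨i, j, hij, hi, hj⟩
    have hne : i ≠ j := hij.ne
    refine ⟨Finsupp.single i 1 + Finsupp.single j 1, ⟨i, j, hij, rfl⟩, ?_⟩
    rw [Finsupp.le_def]
    intro s
    rw [Finsupp.add_apply]
    by_cases hsi : s = i
    · subst hsi
      rw [Finsupp.single_eq_same, Finsupp.single_eq_of_ne' (Ne.symm hne)]
      omega
    · rw [Finsupp.single_eq_of_ne' (Ne.symm hsi)]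
      by_cases hsj : s = j
      · subst hsj
        rw [Finsupp.single_eq_same]
        omega
      · rw [Finsupp.single_eq_of_ne' (Ne.symm hsj)]
        omega

lemma monomial_mem_edgeIdeal_iff {K V : Type*} [Field K] {G : SimpleGraph V} {a : V →₀ ℕ} :
    monomial a (1 : K) ∈ edgeIdeal K G ↔ ∃ i j, G.Adj i j ∧ a i ≠ 0 ∧ a j ≠ 0 := by
  classical
  rw [mem_edgeIdeal_iff]
  rw [support_monomial, if_neg (one_ne_zero)]
  simp

lemma colon_monomial {K V : Type*} [Field K] {G : SimpleGraph V} (a : V →₀ ℕ)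
    (hind : ∀ ⦃i j⦄, G.Adj i j → a i = 0 ∨ a j = 0)
    (hcov : ∀ ⦃i j⦄, G.Adj i j →
      ((∃ p, G.Adj i p ∧ a p ≠ 0) ∨ (∃ p, G.Adj j p ∧ a p ≠ 0))) :
    Submodule.colon (edgeIdeal K G) (Ideal.span {monomial a (1 : K)}) =
      Ideal.span (X '' {i | ∃ p, G.Adj i p ∧ a p ≠ 0}) := by
  classical
  ext r
  rw [Ideal.mem_colon_span_singleton, mem_ideal_span_X_image]
  constructor
  · intro h d hd
    have hda : d + a ∈ (r * monomial a (1 : K)).support := by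
      rw [MvPolynomial.mem_support_iff, coeff_mul_monomial, mul_one]
      exact MvPolynomial.mem_support_iff.1 hd
    obtain ⟨i, j, hij, hi, hj⟩ := mem_edgeIdeal_iff.1 h _ hda
    rw [Finsupp.add_apply] at hi hj
    rcases hind hij with hai | haj
    · by_cases haj' : a j = 0
      · rcases hcov hij with ⟨p, hp, hap⟩ | ⟨p, hp, hap⟩
        · exact ⟨i, ⟨p, hp, hap⟩, by omega⟩
        · exact ⟨j, ⟨p, hp, hap⟩, by omega⟩
      · exact ⟨i, ⟨j, hij, haj'⟩, by omega⟩
    · by_cases hai' : a i = 0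
      · rcases hcov hij with ⟨p, hp, hap⟩ | ⟨p, hp, hap⟩
        · exact ⟨i, ⟨p, hp, hap⟩, by omega⟩
        · exact ⟨j, ⟨p, hp, hap⟩, by omega⟩
      · exact ⟨j, ⟨i, hij.symm, hai'⟩, by omega⟩
  · intro h
    -- r ∈ span (X '' NA) → r * monomial a 1 ∈ edgeIdeal
    rw [mem_edgeIdeal_iff]
    intro d hd
    have hd' : ∃ e ∈ r.support, e + a = d := by
      by_contra hcon
      push_neg at hcon
      have : coeff d (r * monomial a (1 : K)) = 0 := by
        rw [MvPolynomial.coeff_mul_monomial']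
        split_ifs with hle
        · rw [mul_one]
          by_contra hne
          exact hcon (d - a) (MvPolynomial.mem_support_iff.2 hne) (by
            ext s
            have := Finsupp.le_def.1 hle s
            simp only [Finsupp.add_apply, Finsupp.tsub_apply]
            omega)
        · rfl
      exact MvPolynomial.mem_support_iff.1 hd this
    obtain ⟨e, he, rfl⟩ := hd'
    obtain ⟨i, hiNA, hei⟩ := h e he
    obtain ⟨p, hip, hap⟩ := hiNA
    exact ⟨i, p, hip, by rw [Finsupp.add_apply]; omega,
      by rw [Finsupp.add_apply]; omega⟩

lemma colon_mem_associatedPrimes {σ K : Type*} [Field K] (I : Ideal (MvPolynomial σ K))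
    (f : MvPolynomial σ K)
    (h : (Submodule.colon I (Ideal.span {f})).IsPrime) :
    Submodule.colon I (Ideal.span {f}) ∈
      associatedPrimes (MvPolynomial σ K) (MvPolynomial σ K ⧸ I) := by
  have hc : Submodule.colon I (Ideal.span {f}) =
      (⊥ : Submodule (MvPolynomial σ K) (MvPolynomial σ K ⧸ I)).colon
        {Ideal.Quotient.mk I f} := by
    ext r
    rw [Submodule.mem_colon_singleton, Ideal.mem_colon_span_singleton, Submodule.mem_bot]
    have : r • (Ideal.Quotient.mk I) f = Ideal.Quotient.mk I (r * f) := by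
      rfl
    rw [this, Ideal.Quotient.eq_zero_iff_mem]
  refine ⟨h, Ideal.Quotient.mk I f, ?_⟩
  rw [← hc]
  exact h.radical.symm

lemma card_filter_range_mod4 (s : ℕ) (hs : s < 4) (n : ℕ) :
    ((Finset.range n).filter (fun i => i % 4 = s)).card = (n + 3 - s) / 4 := by
  induction n with
  | zero => simp; omega
  | succ n ih =>
    rw [Finset.range_add_one, Finset.filter_insert]
    split_ifs with h
    · rw [Finset.card_insert_of_notMem (by simp)]
      omega
    · omega

lemma card_filter_fin_val {n : ℕ} (p : ℕ → Prop) [DecidablePred p] :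
    (Finset.univ.filter (fun i : Fin n => p i.val)).card =
      ((Finset.range n).filter p).card := by
  apply Finset.card_bij (fun a _ => a.val)
  · intro a ha
    simp only [Finset.mem_filter, Finset.mem_range] at *
    exact ⟨a.isLt, ha.2⟩
  · intro a _ b _ hab
    exact Fin.val_injective hab
  · intro b hb
    simp only [Finset.mem_filter, Finset.mem_range] at hb
    exact ⟨⟨b, hb.1⟩, by simp [hb.2], rfl⟩

lemma pathGraph_cover_card {n : ℕ} (C : Finset (Fin n))
    (hcov : ∀ i j : Fin n, (SimpleGraph.pathGraph n).Adj i j → i ∈ C ∨ j ∈ C) :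
    n / 2 ≤ C.card := by
  classical
  have hg : ∀ i : Fin (n / 2), ∃ c ∈ C, c.val = 2 * i.val ∨ c.val = 2 * i.val + 1 := by
    intro i
    have hin : i.val < n / 2 := i.isLt
    have h1 : 2 * i.val + 1 < n := by omega
    have h0 : 2 * i.val < n := by omega
    rcases hcov ⟨2 * i.val, h0⟩ ⟨2 * i.val + 1, h1⟩
        (SimpleGraph.pathGraph_adj.2 (Or.inl rfl)) with h | h
    · exact ⟨_, h, Or.inl rfl⟩
    · exact ⟨_, h, Or.inr rfl⟩
  choose g hgC hgval using hg
  have hcard := Finset.card_le_card_of_injOn (s := (Finset.univ : Finset (Fin (n / 2))))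
      (t := C) g (fun i _ => hgC i) ?_
  · simpa using hcard
  · intro i _ j _ hij
    have h1 := hgval i
    have h2 := hgval j
    rw [hij] at h1
    have : i.val = j.val := by omega
    exact Fin.ext this

lemma pathGraph_nbhd_card {n : ℕ} (A NA : Finset (Fin n))
    (h : ∀ i ∈ NA, ∃ j ∈ A, (SimpleGraph.pathGraph n).Adj i j) :
    NA.card ≤ 2 * A.card := by
  classical
  have hsub : NA ⊆ A.biUnion
      (fun a => Finset.univ.filter (fun i => (SimpleGraph.pathGraph n).Adj a i)) := by
    intro i hi
    obtain ⟨j, hj, hadj⟩ := h i hi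
    rw [Finset.mem_biUnion]
    exact ⟨j, hj, by simp [hadj.symm]⟩
  refine le_trans (Finset.card_le_card hsub) (le_trans (Finset.card_biUnion_le) ?_)
  have hnb : ∀ a : Fin n,
      (Finset.univ.filter (fun i => (SimpleGraph.pathGraph n).Adj a i)).card ≤ 2 := by
    intro a
    have himg : (Finset.univ.filter (fun i => (SimpleGraph.pathGraph n).Adj a i)).image
        Fin.val ⊆ {a.val + 1, a.val - 1} := by
      intro m hm
      simp only [Finset.mem_image, Finset.mem_filter] at hm
      obtain ⟨i, ⟨_, hadj⟩, rfl⟩ := hm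
      rw [SimpleGraph.pathGraph_adj] at hadj
      simp only [Finset.mem_insert, Finset.mem_singleton]
      omega
    have := Finset.card_le_card himg
    rw [Finset.card_image_of_injective _ Fin.val_injective] at this
    exact le_trans this (le_trans (Finset.card_insert_le _ _) (by simp))
  calc ∑ a ∈ A, (Finset.univ.filter (fun i => (SimpleGraph.pathGraph n).Adj a i)).card
      ≤ ∑ _a ∈ A, 2 := Finset.sum_le_sum (fun a _ => hnb a)
    _ = 2 * A.card := by rw [Finset.sum_const, smul_eq_mul, mul_comm]

/-- For n ≥ 2, v(P_n) = ⌊n/4⌋ if n ≡ 0,1 (mod 4) and ⌊n/4⌋ + 1 if n ≡ 2,3 (mod 4). -/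
theorem vNumber_pathGraph {K : Type*} [Field K] (n : ℕ) (hn : 2 ≤ n) :
    vNumber (edgeIdeal K (SimpleGraph.pathGraph n)) =
      if n % 4 = 0 ∨ n % 4 = 1 then n / 4 else n / 4 + 1 := by
  classical
  have hval : (if n % 4 = 0 ∨ n % 4 = 1 then n / 4 else n / 4 + 1) = (n / 2 + 1) / 2 := by
    split_ifs with h <;> omega
  rw [hval]
  set v0 := (n / 2 + 1) / 2 with hv0
  set s4 := if n % 4 = 1 then 2 else 1 with hs4def
  have hs4 : (s4 = 1 ∧ n % 4 ≠ 1) ∨ (s4 = 2 ∧ n % 4 = 1) := by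
    by_cases h : n % 4 = 1 <;> simp [hs4def, h]
  set A := Finset.univ.filter (fun i : Fin n => i.val % 4 = s4) with hA
  set a : Fin n →₀ ℕ := ⟨A, fun i => if i ∈ A then 1 else 0, fun i => by
    by_cases h : i ∈ A <;> simp [h]⟩ with ha
  have hmemA : ∀ p : Fin n, p ∈ A ↔ p.val % 4 = s4 := fun p => by simp [hA]
  have haapp : ∀ p : Fin n, a p ≠ 0 ↔ p.val % 4 = s4 := by
    intro p
    show (if p ∈ A then 1 else 0) ≠ 0 ↔ _
    split_ifs with h
    · simpa using (hmemA p).1 h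
    · exact ⟨fun h0 => absurd rfl h0, fun hc => absurd ((hmemA p).2 hc) h⟩
  have hAcard : A.card = v0 := by
    rw [hA, card_filter_fin_val (fun m => m % 4 = s4),
      card_filter_range_mod4 s4 (by omega)]
    rcases hs4 with ⟨h1, h2⟩ | ⟨h1, h2⟩ <;> omega
  have hdeg : a.degree = v0 := by
    show ∑ i ∈ a.support, a i = v0
    have hsup : a.support = A := rfl
    rw [hsup]
    have : ∀ i ∈ A, a i = 1 := fun i hi => by
      show (if i ∈ A then 1 else 0) = 1
      rw [if_pos hi]
    rw [Finset.sum_congr rfl this, ← Finset.card_eq_sum_ones, hAcard]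
  have hhom : (monomial a (1 : K)).IsHomogeneous v0 := isHomogeneous_monomial 1 hdeg
  have hind : ∀ ⦃i j : Fin n⦄, (SimpleGraph.pathGraph n).Adj i j → a i = 0 ∨ a j = 0 := by
    intro i j hij
    by_contra hcon
    push_neg at hcon
    have h1 := (haapp i).1 hcon.1
    have h2 := (haapp j).1 hcon.2
    rw [SimpleGraph.pathGraph_adj] at hij
    omega
  have helper2 : ∀ (i : Fin n) (w : ℕ) (hw : w < n),
      (i.val + 1 = w ∨ w + 1 = i.val) → w % 4 = s4 →
      ∃ p, (SimpleGraph.pathGraph n).Adj i p ∧ a p ≠ 0 := by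
    intro i w hw hadj hmod
    exact ⟨⟨w, hw⟩, SimpleGraph.pathGraph_adj.2 hadj, (haapp _).2 hmod⟩
  have hcons : ∀ i j : Fin n, i.val + 1 = j.val →
      ((∃ p, (SimpleGraph.pathGraph n).Adj i p ∧ a p ≠ 0) ∨
        (∃ p, (SimpleGraph.pathGraph n).Adj j p ∧ a p ≠ 0)) := by
    intro i j hij
    have hjn : j.val < n := j.isLt
    have hm : i.val % 4 = 0 ∨ i.val % 4 = 1 ∨ i.val % 4 = 2 ∨ i.val % 4 = 3 := by omega
    rcases hs4 with ⟨h1, h2⟩ | ⟨h1, h2⟩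
    · rcases hm with h | h | h | h
      · exact Or.inl (helper2 i j.val hjn (Or.inl hij) (by omega))
      · exact Or.inr (helper2 j i.val i.isLt (Or.inr hij) (by omega))
      · exact Or.inl (helper2 i (i.val - 1) (by omega) (by omega) (by omega))
      · exact Or.inr (helper2 j (i.val + 2) (by omega) (by omega) (by omega))
    · rcases hm with h | h | h | h
      · exact Or.inr (helper2 j (i.val + 2) (by omega) (by omega) (by omega))
      · exact Or.inl (helper2 i j.val hjn (Or.inl hij) (by omega))
      · exact Or.inr (helper2 j i.val i.isLt (Or.inr hij) (by omega))
      · exact Or.inl (helper2 i (i.val - 1) (by omega) (by omega) (by omega))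
  have hcov : ∀ ⦃i j : Fin n⦄, (SimpleGraph.pathGraph n).Adj i j →
      ((∃ p, (SimpleGraph.pathGraph n).Adj i p ∧ a p ≠ 0) ∨
        (∃ p, (SimpleGraph.pathGraph n).Adj j p ∧ a p ≠ 0)) := by
    intro i j hij
    rcases SimpleGraph.pathGraph_adj.1 hij with h | h
    · exact hcons i j h
    · exact (hcons j i h).symm
  have hcolon := colon_monomial (K := K) (G := SimpleGraph.pathGraph n) a hind hcov
  have hprime : (Submodule.colon (edgeIdeal K (SimpleGraph.pathGraph n))
      (Ideal.span {monomial a (1 : K)})).IsPrime := by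
    rw [hcolon]
    exact span_X_isPrime _
  have hmem_v0 : v0 ∈ {k : ℕ | ∃ f : MvPolynomial (Fin n) K, f.IsHomogeneous k ∧
      Submodule.colon (edgeIdeal K (SimpleGraph.pathGraph n)) (Ideal.span {f}) ∈
        associatedPrimes (MvPolynomial (Fin n) K)
          (MvPolynomial (Fin n) K ⧸ (edgeIdeal K (SimpleGraph.pathGraph n)))} :=
    ⟨monomial a 1, hhom, colon_mem_associatedPrimes _ _ hprime⟩
  have hlow : ∀ k ∈ {k : ℕ | ∃ f : MvPolynomial (Fin n) K, f.IsHomogeneous k ∧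
      Submodule.colon (edgeIdeal K (SimpleGraph.pathGraph n)) (Ideal.span {f}) ∈
        associatedPrimes (MvPolynomial (Fin n) K)
          (MvPolynomial (Fin n) K ⧸ (edgeIdeal K (SimpleGraph.pathGraph n)))}, v0 ≤ k := by
    rintro k ⟨f, hfhom, hassoc⟩
    have hP : (Submodule.colon (edgeIdeal K (SimpleGraph.pathGraph n))
        (Ideal.span {f})).IsPrime := hassoc.1
    have hfI : f ∉ edgeIdeal K (SimpleGraph.pathGraph n) := by
      intro hf
      apply hP.ne_top
      rw [Ideal.eq_top_iff_one]
      exact Ideal.mem_colon_span_singleton.2 (by rwa [one_mul])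
    have hnm : ¬ (∀ d ∈ f.support, ∃ i j, (SimpleGraph.pathGraph n).Adj i j ∧
        d i ≠ 0 ∧ d j ≠ 0) := fun h => hfI (mem_edgeIdeal_iff.2 h)
    push_neg at hnm
    obtain ⟨d, hd, hnoedge⟩ := hnm
    have hddeg : d.degree = k := by
      by_contra hne
      exact (MvPolynomial.mem_support_iff.1 hd) (hfhom.coeff_eq_zero hne)
    have hcard_le : d.support.card ≤ k := by
      rw [← hddeg]
      show _ ≤ ∑ i ∈ d.support, d i
      rw [Finset.card_eq_sum_ones]
      exact Finset.sum_le_sum (fun i hi => Nat.one_le_iff_ne_zero.2 (Finsupp.mem_support_iff.1 hi))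
    set Cset := Finset.univ.filter (fun i : Fin n =>
      X i ∈ Submodule.colon (edgeIdeal K (SimpleGraph.pathGraph n)) (Ideal.span {f})) with hCset
    set NAset := Finset.univ.filter (fun i : Fin n =>
      ∃ j ∈ d.support, (SimpleGraph.pathGraph n).Adj i j) with hNAset
    have hCcov : ∀ i j : Fin n, (SimpleGraph.pathGraph n).Adj i j → i ∈ Cset ∨ j ∈ Cset := by
      intro i j hij
      have hXX : (X i * X j : MvPolynomial (Fin n) K) ∈ edgeIdeal K (SimpleGraph.pathGraph n) :=
        Ideal.subset_span ⟨i, j, hij, rfl⟩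
      have hIP : X i * X j ∈ Submodule.colon (edgeIdeal K (SimpleGraph.pathGraph n))
          (Ideal.span {f}) :=
        Ideal.mem_colon_span_singleton.2 (Ideal.mul_mem_right f _ hXX)
      rcases hP.mem_or_mem hIP with h | h
      · exact Or.inl (Finset.mem_filter.2 ⟨Finset.mem_univ _, h⟩)
      · exact Or.inr (Finset.mem_filter.2 ⟨Finset.mem_univ _, h⟩)
    have hCN : ∀ i ∈ Cset, ∃ j ∈ d.support, (SimpleGraph.pathGraph n).Adj i j := by
      intro i hi
      have hXi : X i * f ∈ edgeIdeal K (SimpleGraph.pathGraph n) :=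
        Ideal.mem_colon_span_singleton.1 (Finset.mem_filter.1 hi).2
      have hXf : (X i * f : MvPolynomial (Fin n) K) = monomial (Finsupp.single i 1) 1 * f := by
        rw [X]
      have hsupp : Finsupp.single i 1 + d ∈ (X i * f).support := by
        rw [MvPolynomial.mem_support_iff, hXf, coeff_monomial_mul, one_mul]
        exact MvPolynomial.mem_support_iff.1 hd
      obtain ⟨p, q, hpq, hp, hq⟩ := mem_edgeIdeal_iff.1 hXi _ hsupp
      rw [Finsupp.add_apply] at hp hq
      by_cases hdp : d p = 0
      · have hpi : p = i := by
          by_contra hne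
          exact hp (by rw [Finsupp.single_eq_of_ne' (fun hh => hne hh.symm), hdp])
        subst hpi
        have hqi : q ≠ p := Ne.symm hpq.ne
        have hdq : d q ≠ 0 := by
          intro h0
          exact hq (by rw [Finsupp.single_eq_of_ne' (fun hh => hqi hh.symm), h0])
        exact ⟨q, Finsupp.mem_support_iff.2 hdq, hpq⟩
      · have hdq : d q = 0 := hnoedge p q hpq hdp
        have hqi : q = i := by
          by_contra hne
          exact hq (by rw [Finsupp.single_eq_of_ne' (fun hh => hne hh.symm), hdq])
        subst hqi
        exact ⟨p, Finsupp.mem_support_iff.2 hdp, hpq.symm⟩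
    have hsubCN : Cset ⊆ NAset := fun i hi =>
      Finset.mem_filter.2 ⟨Finset.mem_univ _, hCN i hi⟩
    have hNAcov : ∀ i j : Fin n, (SimpleGraph.pathGraph n).Adj i j →
        i ∈ NAset ∨ j ∈ NAset := fun i j h =>
      (hCcov i j h).imp (fun hi => hsubCN hi) (fun hj => hsubCN hj)
    have h2 := pathGraph_cover_card NAset hNAcov
    have h3 := pathGraph_nbhd_card d.support NAset
      (fun i hi => (Finset.mem_filter.1 hi).2)
    omega
  unfold vNumber
  exact le_antisymm (Nat.sInf_le hmem_v0) (le_csInf ⟨v0, hmem_v0⟩ hlow)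
end
end

section
/- Let I ⊆ S = K[x_1,…,x_t] be an 𝔪-primary monomial ideal, and let M be the set of all t×t matrices A = (a_ij) with nonnegative integer entries such that: each row of A is the exponent vector of some element of G(I); a_ii > a_li for every i and every l ≠ i; and the monomial x_1^{a_11 − 1} x_2^{a_22 − 1} ⋯ x_t^{a_tt − 1} does not belong to I. Then M is nonempty and v(I) = min{ (a_11 + a_22 + ⋯ + a_tt) − t : A = (a_ij) ∈ M }. -/
open MvPolynomial

noncomputable section

namespace VAux

variable {K : Type*} [Field K] {σ : Type*}

theorem mem_mxi {f : MvPolynomial σ K} : f ∈ maxIdeal K σ ↔ constantCoeff f = 0 := by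
  rw [maxIdeal, ← Set.image_univ, mem_ideal_span_X_image]
  constructor
  · intro h
    rw [constantCoeff_eq]
    by_contra h0
    obtain ⟨i, -, hi⟩ := h 0 (mem_support_iff.mpr h0)
    simp at hi
  · intro h m hm
    by_contra hc
    push_neg at hc
    have : m = 0 := by
      ext i
      simpa using hc i (Set.mem_univ i)
    rw [this] at hm
    rw [constantCoeff_eq] at h
    exact (mem_support_iff.mp hm) h

theorem mxi_eq_ker : maxIdeal K σ = RingHom.ker (constantCoeff : MvPolynomial σ K →+* K) := by
  ext f; simpa [RingHom.mem_ker] using (mem_mxi (f := f))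

theorem mxi_isMaximal : (maxIdeal K σ).IsMaximal := by
  rw [mxi_eq_ker]
  exact RingHom.ker_isMaximal_of_surjective _ fun k => ⟨C k, constantCoeff_C _ _⟩

theorem one_not_mem_mxi : (1 : MvPolynomial σ K) ∉ maxIdeal K σ := by
  simp [mem_mxi]

theorem X_mem_mxi (i : σ) : (X i : MvPolynomial σ K) ∈ maxIdeal K σ :=
  Ideal.subset_span ⟨i, rfl⟩

/-! ### associated primes of an 𝔪-primary ideal -/

theorem ass_eq_singleton {I : Ideal (MvPolynomial σ K)}
    [IsNoetherianRing (MvPolynomial σ K)]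
    (hprim : I.radical = maxIdeal K σ) :
    associatedPrimes (MvPolynomial σ K) (MvPolynomial σ K ⧸ I) = {maxIdeal K σ} := by
  have hne : I ≠ ⊤ := by
    intro h
    exact one_not_mem_mxi (K := K) (σ := σ)
      (hprim ▸ Ideal.le_radical (h ▸ Submodule.mem_top))
  haveI : Nontrivial (MvPolynomial σ K ⧸ I) := Ideal.Quotient.nontrivial_iff.mpr hne
  have hsub : ∀ P ∈ associatedPrimes (MvPolynomial σ K) (MvPolynomial σ K ⧸ I),
      P = maxIdeal K σ := by
    rintro P ⟨hPprime, x, hx⟩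
    have hIP : I ≤ P := by
      intro r hr
      rw [hx]
      refine Ideal.le_radical ?_
      rw [Submodule.mem_colon]
      intro m _
      obtain ⟨y, rfl⟩ := Submodule.Quotient.mk_surjective I m
      rw [← Submodule.Quotient.mk_smul, Submodule.mem_bot, Submodule.Quotient.mk_eq_zero]
      rw [smul_eq_mul]; exact Ideal.mul_mem_right y I hr
    have hle : maxIdeal K σ ≤ P := by
      calc maxIdeal K σ = I.radical := hprim.symm
      _ ≤ P.radical := Ideal.radical_mono hIP
      _ = P := hPprime.radical
    exact ((mxi_isMaximal).eq_of_le hPprime.ne_top hle).symm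
  obtain ⟨P, hP⟩ := associatedPrimes.nonempty (MvPolynomial σ K) (MvPolynomial σ K ⧸ I)
  have hm : maxIdeal K σ ∈ associatedPrimes (MvPolynomial σ K) (MvPolynomial σ K ⧸ I) :=
    hsub P hP ▸ hP
  exact Set.eq_singleton_iff_unique_mem.mpr ⟨hm, hsub⟩


/-! ### monomial ideal lemmas -/

section Mono
variable {t : ℕ} {I : Ideal (MvPolynomial (Fin t) K)} {A : Set (Fin t →₀ ℕ)}
variable (hI : I = Ideal.span ((fun a => (monomial a (1 : K))) '' A))
include hI

theorem mono_mem {c : Fin t →₀ ℕ} : monomial c (1:K) ∈ I ↔ ∃ s ∈ A, s ≤ c := by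
  rw [hI, mem_ideal_span_monomial_image]
  simp [support_monomial]

theorem mono_up {b c : Fin t →₀ ℕ} (hbc : b ≤ c) (hb : monomial b (1:K) ∈ I) :
    monomial c (1:K) ∈ I := by
  rw [mono_mem hI] at hb ⊢
  obtain ⟨s, hs, hsb⟩ := hb
  exact ⟨s, hs, le_trans hsb hbc⟩

theorem mem_iff_support {f : MvPolynomial (Fin t) K} :
    f ∈ I ↔ ∀ m ∈ f.support, monomial m (1:K) ∈ I := by
  rw [hI, mem_ideal_span_monomial_image]
  refine forall₂_congr fun m _ => ?_
  rw [← hI, mono_mem hI]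

omit hI in
theorem deg_lt {b c : Fin t →₀ ℕ} (hbc : b ≤ c) (hne : b ≠ c) :
    (∑ i, b i) < ∑ i, c i := by
  refine Finset.sum_lt_sum (fun i _ => hbc i) ?_
  by_contra h
  push_neg at h
  exact hne (Finsupp.ext fun i => le_antisymm (hbc i) (h i (Finset.mem_univ i)))

theorem exists_minGen {c : Fin t →₀ ℕ} (hc : monomial c (1:K) ∈ I) :
    ∃ g ∈ minimalGenerators I, g ≤ c := by
  obtain ⟨n, hn⟩ : ∃ n, (∑ i, c i) = n := ⟨_, rfl⟩
  induction n using Nat.strong_induction_on generalizing c with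
  | _ n ih =>
    by_cases h : ∀ b : Fin t →₀ ℕ, b ≤ c → b ≠ c → monomial b (1:K) ∉ I
    · exact ⟨c, ⟨hc, h⟩, le_refl c⟩
    · push_neg at h
      obtain ⟨b, hbc, hbne, hbI⟩ := h
      obtain ⟨g, hg, hgb⟩ := ih (∑ i, b i) (hn ▸ deg_lt hbc hbne) hbI rfl
      exact ⟨g, hg, le_trans hgb hbc⟩


/-- The socle predicate. -/
def Soc (I : Ideal (MvPolynomial (Fin t) K)) (c : Fin t →₀ ℕ) : Prop :=
  monomial c (1:K) ∉ I ∧ ∀ i, monomial (c + Finsupp.single i 1) (1:K) ∈ I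

omit hI in
theorem X_mul_monomial' (i : Fin t) (c : Fin t →₀ ℕ) :
    (X i : MvPolynomial (Fin t) K) * monomial c 1 = monomial (c + Finsupp.single i 1) 1 := by
  rw [X, monomial_mul, one_mul, add_comm]

omit hI in
theorem mxi_le_colon {c : Fin t →₀ ℕ} (hs : ∀ i, monomial (c + Finsupp.single i 1) (1:K) ∈ I) :
    maxIdeal K (Fin t) ≤ Submodule.colon I (Ideal.span {monomial c (1:K)}) := by
  rw [maxIdeal]
  refine Ideal.span_le.mpr ?_
  rintro _ ⟨i, rfl⟩
  rw [SetLike.mem_coe, Ideal.mem_colon_span_singleton, X_mul_monomial']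
  exact hs i

omit hI in
theorem colon_eq_mxi {c : Fin t →₀ ℕ} (hc : monomial c (1:K) ∉ I)
    (hs : ∀ i, monomial (c + Finsupp.single i 1) (1:K) ∈ I) :
    Submodule.colon I (Ideal.span {monomial c (1:K)}) = maxIdeal K (Fin t) := by
  refine le_antisymm ?_ (mxi_le_colon hs)
  intro g hg
  rw [Ideal.mem_colon_span_singleton] at hg
  rw [mem_mxi]
  by_contra h0
  have hg' : (g - C (constantCoeff g)) ∈ maxIdeal K (Fin t) := by
    rw [mem_mxi]; simp
  have h1 : (g - C (constantCoeff g)) * monomial c (1:K) ∈ I := by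
    have := mxi_le_colon hs hg'
    rwa [Ideal.mem_colon_span_singleton] at this
  have h2 : C (constantCoeff g) * monomial c (1:K) ∈ I := by
    have := I.sub_mem hg h1
    have heq : g * monomial c (1:K) - (g - C (constantCoeff g)) * monomial c (1:K)
        = C (constantCoeff g) * monomial c (1:K) := by ring
    rwa [heq] at this
  rw [C_mul_monomial, mul_one] at h2
  have h3 := Ideal.mul_mem_left I (C (constantCoeff g)⁻¹) h2
  rw [C_mul_monomial, inv_mul_cancel₀ h0] at h3
  exact hc h3

theorem socle_of_colon {f : MvPolynomial (Fin t) K} {k : ℕ} (hf : f.IsHomogeneous k)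
    (hcol : Submodule.colon I (Ideal.span {f}) = maxIdeal K (Fin t)) :
    ∃ c : Fin t →₀ ℕ, Soc I c ∧ (∑ i, c i) = k := by
  have hfI : f ∉ I := by
    intro hfI
    refine one_not_mem_mxi (K := K) (σ := Fin t) ?_
    rw [← hcol, Ideal.mem_colon_span_singleton, one_mul]
    exact hfI
  rw [mem_iff_support hI] at hfI
  push_neg at hfI
  obtain ⟨c, hcs, hcI⟩ := hfI
  have hstep : ∀ i, monomial (c + Finsupp.single i 1) (1:K) ∈ I := by
    intro i
    have hXf : X i * f ∈ I := by
      have := hcol ▸ X_mem_mxi (K := K) i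
      rwa [Ideal.mem_colon_span_singleton] at this
    rw [mem_iff_support hI] at hXf
    refine hXf _ ?_
    rw [mem_support_iff, add_comm, coeff_X_mul]
    exact mem_support_iff.mp hcs
  refine ⟨c, ⟨hcI, hstep⟩, ?_⟩
  have := hf (mem_support_iff.mp hcs)
  change Finsupp.weight (fun _ => 1) c = k at this
  rw [← Finsupp.degree_eq_weight_one] at this
  rw [← this, Finsupp.degree]
  exact (Finset.sum_subset (Finset.subset_univ _)
    (fun i _ hi => Finsupp.notMem_support_iff.mp hi)).symm

omit hI in
theorem colon_monomial_eq_mxi {c : Fin t →₀ ℕ} (hc : Soc I c) :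
    Submodule.colon I (Ideal.span {monomial c (1:K)}) = maxIdeal K (Fin t) :=
  colon_eq_mxi hc.1 hc.2


omit hI in
theorem monomial_isHomogeneous (c : Fin t →₀ ℕ) :
    (monomial c (1:K)).IsHomogeneous (∑ i, c i) := by
  refine isHomogeneous_monomial _ ?_
  rw [Finsupp.degree]
  exact Finset.sum_subset (Finset.subset_univ _)
    (fun i _ hi => Finsupp.notMem_support_iff.mp hi)


omit hI in
theorem finsupp_le_iff {b c : Fin t →₀ ℕ} : b ≤ c ↔ ∀ i, b i ≤ c i := by
  rw [Finsupp.le_iff' b c (Finset.subset_univ _)]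
  exact ⟨fun h i => h i (Finset.mem_univ i), fun h i _ => h i⟩

omit hI in
theorem symm_apply (g : Fin t → ℕ) (i : Fin t) :
    (Finsupp.equivFunOnFinite.symm g) i = g i := rfl

/-- From a matrix in `M` to a socle element. -/
theorem matrix_to_socle {Amat : Matrix (Fin t) (Fin t) ℕ}
    (hrows : ∀ i, Finsupp.equivFunOnFinite.symm (Amat i) ∈ minimalGenerators I)
    (hdiag : ∀ i l, l ≠ i → Amat l i < Amat i i)
    (hnot : monomial (Finsupp.equivFunOnFinite.symm (fun i => Amat i i - 1)) (1 : K) ∉ I) :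
    Soc I (Finsupp.equivFunOnFinite.symm (fun i => Amat i i - 1)) ∧
      (∑ i, Amat i i) - t = ∑ i, (Finsupp.equivFunOnFinite.symm (fun i => Amat i i - 1)) i := by
  set c : Fin t →₀ ℕ := Finsupp.equivFunOnFinite.symm (fun i => Amat i i - 1) with hc
  have hci : ∀ i, c i = Amat i i - 1 := fun i => rfl
  have hge1 : ∀ i, 1 ≤ Amat i i := by
    intro i
    by_contra h
    push_neg at h
    apply hnot
    refine mono_up hI ?_ (hrows i).1
    rw [finsupp_le_iff]
    intro j
    rw [symm_apply, hci]
    by_cases hji : j = i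
    · subst hji; omega
    · have := hdiag j i (fun h => hji h.symm)
      omega
  constructor
  · refine ⟨hnot, fun i => ?_⟩
    refine mono_up hI ?_ (hrows i).1
    rw [finsupp_le_iff]
    intro j
    have hgj := hge1 j
    rw [symm_apply, Finsupp.add_apply, hci]
    by_cases hji : j = i
    · subst hji
      rw [Finsupp.single_eq_same]
      omega
    · have := hdiag j i (fun h => hji h.symm)
      rw [Finsupp.single_eq_of_ne' (fun h => hji h.symm)]
      omega
  · have hsum : ∑ i, Amat i i = (∑ i, c i) + t := by
      calc ∑ i, Amat i i = ∑ i, ((Amat i i - 1) + 1) :=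
            Finset.sum_congr rfl fun i _ => by have := hge1 i; omega
      _ = (∑ i, (Amat i i - 1)) + ∑ _i : Fin t, 1 := Finset.sum_add_distrib
      _ = (∑ i, c i) + t := by simp [hci]
    omega

/-- From a socle element to a matrix in `M`. -/
theorem socle_to_matrix {c : Fin t →₀ ℕ} (hc : Soc I c) :
    ∃ Amat : Matrix (Fin t) (Fin t) ℕ,
      ((∀ i, Finsupp.equivFunOnFinite.symm (Amat i) ∈ minimalGenerators I) ∧
        (∀ i l, l ≠ i → Amat l i < Amat i i) ∧
        (monomial (Finsupp.equivFunOnFinite.symm (fun i => Amat i i - 1)) (1 : K) ∉ I)) ∧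
      (∑ i, Amat i i) - t = ∑ i, c i := by
  obtain ⟨hcI, hstep⟩ := hc
  choose g hgmin hgle using fun i => exists_minGen hI (hstep i)
  set Amat : Matrix (Fin t) (Fin t) ℕ := fun i j => g i j with hA
  have hAg : ∀ i, Finsupp.equivFunOnFinite.symm (Amat i) = g i := by
    intro i
    exact Finsupp.equivFunOnFinite.symm_apply_apply (g i)
  have hdiagval : ∀ i, Amat i i = c i + 1 := by
    intro i
    have hle : g i i ≤ c i + 1 := by
      have := (finsupp_le_iff.mp (hgle i)) i
      rwa [Finsupp.add_apply, Finsupp.single_apply, if_pos rfl] at this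
    have hgt : ¬ g i i ≤ c i := by
      intro hgi
      apply hcI
      refine mono_up hI ?_ (hgmin i).1
      rw [finsupp_le_iff]
      intro j
      by_cases hji : j = i
      · subst hji; exact hgi
      · have := (finsupp_le_iff.mp (hgle i)) j
        rwa [Finsupp.add_apply, Finsupp.single_apply, if_neg (fun h => hji h.symm),
          add_zero] at this
    show g i i = c i + 1
    omega
  refine ⟨Amat, ⟨?_, ?_, ?_⟩, ?_⟩
  · intro i; rw [hAg]; exact hgmin i
  · intro i l hli
    have h1 : Amat l i ≤ c i := by
      have := (finsupp_le_iff.mp (hgle l)) i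
      rwa [Finsupp.add_apply, Finsupp.single_apply, if_neg hli, add_zero] at this
    rw [hdiagval i]
    omega
  · have : (fun i => Amat i i - 1) = fun i => c i := by
      funext i; rw [hdiagval i]; omega
    rw [this]
    have : Finsupp.equivFunOnFinite.symm (fun i => c i) = c :=
      Finsupp.equivFunOnFinite.symm_apply_apply c
    rwa [this]
  · have hsum : ∑ i, Amat i i = (∑ i, c i) + t := by
      calc ∑ i, Amat i i = ∑ i, (c i + 1) := Finset.sum_congr rfl fun i _ => hdiagval i
      _ = (∑ i, c i) + ∑ _i : Fin t, 1 := Finset.sum_add_distrib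
      _ = _ := by simp
    omega

/-- Existence of a socle element. -/
theorem socle_nonempty (hprim : I.radical = maxIdeal K (Fin t)) :
    ∃ c : Fin t →₀ ℕ, Soc I c := by
  have hne1 : monomial (0 : Fin t →₀ ℕ) (1:K) ∉ I := by
    rw [monomial_zero', C_1]
    intro h
    exact one_not_mem_mxi (K := K) (σ := Fin t)
      (hprim ▸ Ideal.le_radical h)
  have hpow : ∀ i : Fin t, ∃ n : ℕ, monomial (Finsupp.single i n) (1:K) ∈ I := by
    intro i
    have : (X i : MvPolynomial (Fin t) K) ∈ I.radical := hprim ▸ X_mem_mxi i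
    obtain ⟨n, hn⟩ := this
    exact ⟨n, by rwa [X_pow_eq_monomial] at hn⟩
  choose n hn using hpow
  set T : Set (Fin t →₀ ℕ) := {c | monomial c (1:K) ∉ I} with hT
  have hsubT : T ⊆ Set.Iic (Finsupp.equivFunOnFinite.symm n) := by
    intro c hcT
    rw [Set.mem_Iic, finsupp_le_iff]
    intro i
    by_contra h
    push_neg at h
    rw [symm_apply] at h
    apply hcT
    refine mono_up hI ?_ (hn i)
    rw [finsupp_le_iff]
    intro j
    rw [Finsupp.single_apply]
    by_cases hji : i = j
    · subst hji; rw [if_pos rfl]; omega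
    · rw [if_neg hji]; omega
  have hfinT : T.Finite := Set.Finite.subset (Set.finite_Iic _) hsubT
  obtain ⟨c, hcT, hcmax⟩ := Set.Finite.exists_maximalFor (fun c => ∑ i, c i) T hfinT ⟨0, hne1⟩
  refine ⟨c, hcT, fun i => ?_⟩
  by_contra h
  set d : Fin t →₀ ℕ := c + Finsupp.single i 1 with hd
  have hmem : d ∈ T := h
  have hsum : ∑ j, d j = (∑ j, c j) + 1 := by
    have hco : ∀ j, d j = c j + Finsupp.single i 1 j := fun j => Finsupp.add_apply c _ j
    rw [Finset.sum_congr rfl fun j _ => hco j, Finset.sum_add_distrib]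
    congr 1
    simp [Finsupp.single_apply]
  have h2 : ∑ j, d j ≤ ∑ j, c j := hcmax hmem (by show ∑ j, c j ≤ ∑ j, d j; omega)
  omega

end Mono
end VAux

/-- explicit formula for the v-number of an 𝔪-primary monomial ideal. -/
theorem vNumber_m_primary_formula {K : Type*} [Field K] (t : ℕ)
    (I : Ideal (MvPolynomial (Fin t) K))
    (hmon : IsMonomialIdeal I) (hprim : I.radical = maxIdeal K (Fin t)) :
    let M : Set (Matrix (Fin t) (Fin t) ℕ) :=
      {A | (∀ i, Finsupp.equivFunOnFinite.symm (A i) ∈ minimalGenerators I) ∧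
        (∀ i l, l ≠ i → A l i < A i i) ∧
        (monomial (Finsupp.equivFunOnFinite.symm (fun i => A i i - 1)) (1 : K) ∉ I)}
    M.Nonempty ∧
      vNumber I = sInf ((fun A : Matrix (Fin t) (Fin t) ℕ => (∑ i, A i i) - t) '' M) := by
  intro M
  obtain ⟨A, hI⟩ := hmon
  have hass := VAux.ass_eq_singleton (I := I) hprim
  constructor
  · obtain ⟨c, hc⟩ := VAux.socle_nonempty hI hprim
    obtain ⟨Amat, hAM, -⟩ := VAux.socle_to_matrix hI hc
    exact ⟨Amat, hAM⟩
  · rw [vNumber]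
    congr 1
    ext k
    simp only [M, Set.mem_setOf_eq, Set.mem_image]
    constructor
    · rintro ⟨f, hf, hcol⟩
      rw [hass, Set.mem_singleton_iff] at hcol
      obtain ⟨c, hc, hck⟩ := VAux.socle_of_colon hI hf hcol
      obtain ⟨Amat, hAM, hsum⟩ := VAux.socle_to_matrix hI hc
      exact ⟨Amat, hAM, by rw [hsum, hck]⟩
    · rintro ⟨Amat, ⟨h1, h2, h3⟩, rfl⟩
      obtain ⟨hs, hsum⟩ := VAux.matrix_to_socle hI h1 h2 h3
      refine ⟨monomial (Finsupp.equivFunOnFinite.symm (fun i => Amat i i - 1)) (1:K), ?_, ?_⟩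
      · rw [hsum]
        exact VAux.monomial_isHomogeneous _
      · rw [VAux.colon_monomial_eq_mxi hs, hass]
        exact Set.mem_singleton _
end
end

section
/- Let I ⊆ S = K[x_1,…,x_t] be a proper nonzero monomial ideal. Then there exist positive integers n_0 and d such that v(I^{n+1}) ≤ n·α(I) + d for all n ≥ n_0. -/
open MvPolynomial

noncomputable section

namespace VNumAux

open Pointwise

lemma Finsupp.degree_add {σ : Type*} (a b : σ →₀ ℕ) :
    (a + b).degree = a.degree + b.degree := by
  simp only [Finsupp.degree_eq_weight_one]; exact map_add _ a b

lemma Finsupp.degree_smul {σ : Type*} (k : ℕ) (a : σ →₀ ℕ) :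
    (k • a).degree = k * a.degree := by
  induction k with
  | zero => simp
  | succ k ih => rw [succ_nsmul, Finsupp.degree_add, ih, Nat.succ_mul]

lemma degree_single {σ : Type*} (i : σ) (k : ℕ) : (Finsupp.single i k).degree = k := by
  rcases eq_or_ne k 0 with rfl | hk
  · simp
  · exact Finsupp.degree_single i k

variable {σ K : Type*} [Field K]

/-- The ideal of polynomials all of whose monomials are divisible by a member of `A`. -/
def monClosed (A : Set (σ →₀ ℕ)) (K : Type*) [Field K] : Ideal (MvPolynomial σ K) where
  carrier := {f | ∀ d ∈ f.support, ∃ a ∈ A, ∃ b, d = a + b}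
  zero_mem' := by simp
  add_mem' := by
    classical
    intro p q hp hq d hd
    rcases Finset.mem_union.1 (MvPolynomial.support_add hd) with h | h
    exacts [hp d h, hq d h]
  smul_mem' := by
    classical
    intro c f hf d hd
    rw [smul_eq_mul] at hd
    obtain ⟨d₁, h₁, d₂, h₂, rfl⟩ := Finset.mem_add.1 (MvPolynomial.support_mul c f hd)
    obtain ⟨a, ha, b, rfl⟩ := hf d₂ h₂
    exact ⟨a, ha, b + d₁, by abel⟩

lemma span_le_monClosed (A : Set (σ →₀ ℕ)) :
    Ideal.span ((fun a => (monomial a (1 : K))) '' A) ≤ monClosed A K := by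
  rw [Ideal.span_le]
  rintro f ⟨a, ha, rfl⟩
  intro d hd
  classical
  rw [MvPolynomial.support_monomial, if_neg (one_ne_zero (α := K))] at hd
  simp only [Finset.mem_singleton] at hd
  exact ⟨a, ha, 0, by simp [hd]⟩

lemma monomial_mem {I : Ideal (MvPolynomial σ K)} (h : IsMonomialIdeal I)
    {f : MvPolynomial σ K} (hf : f ∈ I) {d : σ →₀ ℕ} (hd : d ∈ f.support) :
    monomial d (1 : K) ∈ I := by
  obtain ⟨A, rfl⟩ := h
  obtain ⟨a, ha, b, rfl⟩ := span_le_monClosed A hf d hd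
  have h1 : monomial a (1 : K) ∈ Ideal.span ((fun a => (monomial a (1 : K))) '' A) :=
    Ideal.subset_span ⟨a, ha, rfl⟩
  have h2 := Ideal.mul_mem_left _ (monomial b (1 : K)) h1
  rwa [monomial_mul, add_comm b a, mul_one] at h2

lemma pow_monomial_ideal {I : Ideal (MvPolynomial σ K)} (h : IsMonomialIdeal I) (m : ℕ) :
    IsMonomialIdeal (I ^ m) := by
  induction m with
  | zero =>
    refine ⟨{0}, ?_⟩
    simp only [pow_zero, Set.image_singleton, monomial_zero', MvPolynomial.C_1]
    rw [Ideal.one_eq_top, Ideal.span_singleton_one]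
  | succ m ih =>
    obtain ⟨B, hB⟩ := ih
    obtain ⟨A, hA⟩ := h
    refine ⟨B + A, ?_⟩
    rw [pow_succ, hB, hA, Ideal.span_mul_span']
    congr 1
    ext f
    constructor
    · rintro ⟨x, ⟨b, hb, rfl⟩, y, ⟨a, ha, rfl⟩, rfl⟩
      refine ⟨b + a, Set.add_mem_add hb ha, ?_⟩
      simp [monomial_mul]
    · rintro ⟨c, hc, rfl⟩
      rw [Set.mem_add] at hc
      obtain ⟨b, hb, a, ha, rfl⟩ := hc
      refine ⟨monomial b 1, ⟨b, hb, rfl⟩, monomial a 1, ⟨a, ha, rfl⟩, ?_⟩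
      simp [monomial_mul]

/-- The ideal of polynomials all of whose exponent vectors have degree at least `a`. -/
def degLB (σ K : Type*) [Field K] (a : ℕ) : Ideal (MvPolynomial σ K) where
  carrier := {f | ∀ d ∈ f.support, a ≤ d.degree}
  zero_mem' := by simp
  add_mem' := by
    classical
    intro p q hp hq d hd
    rcases Finset.mem_union.1 (MvPolynomial.support_add hd) with h | h
    exacts [hp d h, hq d h]
  smul_mem' := by
    classical
    intro c f hf d hd
    rw [smul_eq_mul] at hd
    obtain ⟨d₁, h₁, d₂, h₂, rfl⟩ := Finset.mem_add.1 (MvPolynomial.support_mul c f hd)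
    calc a ≤ d₂.degree := hf d₂ h₂
    _ ≤ (d₁ + d₂).degree := by rw [Finsupp.degree_add]; omega

lemma degLB_mul (a b : ℕ) : degLB σ K a * degLB σ K b ≤ degLB σ K (a + b) := by
  classical
  rw [Ideal.mul_le]
  intro r hr s hs d hd
  obtain ⟨d₁, h₁, d₂, h₂, rfl⟩ := Finset.mem_add.1 (MvPolynomial.support_mul r s hd)
  rw [Finsupp.degree_add]
  exact Nat.add_le_add (hr d₁ h₁) (hs d₂ h₂)

lemma le_alpha_degree {I : Ideal (MvPolynomial σ K)}
    {d : σ →₀ ℕ} (hd : monomial d (1 : K) ∈ I) : alphaNumber I ≤ d.degree := by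
  apply Nat.sInf_le
  refine ⟨monomial d 1, hd, ?_, ?_⟩
  · simp [monomial_eq_zero]
  · rw [totalDegree_monomial _ (one_ne_zero (α := K))]; rfl

lemma le_degLB {I : Ideal (MvPolynomial σ K)} (h : IsMonomialIdeal I) :
    I ≤ degLB σ K (alphaNumber I) := by
  intro f hf d hd
  exact le_alpha_degree (monomial_mem h hf hd)

lemma pow_le_degLB {I : Ideal (MvPolynomial σ K)} (h : IsMonomialIdeal I) (m : ℕ) :
    I ^ m ≤ degLB σ K (m * alphaNumber I) := by
  induction m with
  | zero => intro f _ d _; simp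
  | succ m ih =>
    rw [pow_succ, Nat.succ_mul]
    exact le_trans (Ideal.mul_mono ih (le_degLB h)) (degLB_mul _ _)

lemma monomial_mem_pow_degree {I : Ideal (MvPolynomial σ K)} (h : IsMonomialIdeal I) {m : ℕ}
    {d : σ →₀ ℕ} (hd : monomial d (1 : K) ∈ I ^ m) : m * alphaNumber I ≤ d.degree := by
  classical
  refine pow_le_degLB h m hd d ?_
  rw [support_monomial, if_neg (one_ne_zero (α := K))]
  exact Finset.mem_singleton_self d

lemma alpha_pos {I : Ideal (MvPolynomial σ K)} (h : IsMonomialIdeal I) (hbot : I ≠ ⊥)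
    (htop : I ≠ ⊤) : 0 < alphaNumber I := by
  obtain ⟨f, hfI, hf0⟩ := Submodule.exists_mem_ne_zero_of_ne_bot hbot
  have hne : {d : ℕ | ∃ f ∈ I, f ≠ 0 ∧ f.totalDegree = d}.Nonempty :=
    ⟨f.totalDegree, f, hfI, hf0, rfl⟩
  rcases Nat.eq_zero_or_pos (alphaNumber I) with hz | hp
  swap
  · exact hp
  exfalso
  obtain ⟨g, hgI, hg0, hgdeg⟩ := Nat.sInf_mem hne
  rw [show sInf _ = alphaNumber I from rfl, hz] at hgdeg
  obtain ⟨d, hd⟩ := Finset.nonempty_iff_ne_empty.2 (fun he => hg0 (support_eq_empty.1 he))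
  have hdeg : d.degree = 0 := by
    have := MvPolynomial.le_totalDegree hd
    rw [hgdeg] at this
    exact Nat.le_zero.1 this
  have hmem : monomial d (1 : K) ∈ I := monomial_mem h hgI hd
  rw [Finsupp.degree_eq_zero_iff] at hdeg
  subst hdeg
  rw [monomial_zero', MvPolynomial.C_1] at hmem
  exact htop (Ideal.eq_top_iff_one I |>.2 hmem)

/-- There is a monomial of minimal degree in a monomial ideal. -/
lemma exists_min_monomial {I : Ideal (MvPolynomial σ K)} (h : IsMonomialIdeal I) (hbot : I ≠ ⊥) :
    ∃ d₀ : σ →₀ ℕ, monomial d₀ (1 : K) ∈ I ∧ d₀.degree = alphaNumber I := by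
  obtain ⟨f, hfI, hf0⟩ := Submodule.exists_mem_ne_zero_of_ne_bot hbot
  have hne : {d : ℕ | ∃ f ∈ I, f ≠ 0 ∧ f.totalDegree = d}.Nonempty :=
    ⟨f.totalDegree, f, hfI, hf0, rfl⟩
  obtain ⟨g, hgI, hg0, hgdeg⟩ := Nat.sInf_mem hne
  obtain ⟨d, hd⟩ := Finset.nonempty_iff_ne_empty.2 (fun he => hg0 (support_eq_empty.1 he))
  refine ⟨d, monomial_mem h hgI hd, le_antisymm ?_ ?_⟩
  · have := MvPolynomial.le_totalDegree hd
    rw [hgdeg] at this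
    exact this
  · exact le_alpha_degree (monomial_mem h hgI hd)

/-- Key lemma: there is a prime ideal of the form `(I^m : monomial c)` which is stable under
simultaneously raising the power and multiplying the witness by powers of a minimal-degree
monomial of `I`. -/
lemma exists_stable_prime {t : ℕ} (I : Ideal (MvPolynomial (Fin t) K))
    (hmon : IsMonomialIdeal I) (hbot : I ≠ ⊥) (htop : I ≠ ⊤) {d₀ : Fin t →₀ ℕ}
    (hd₀I : monomial d₀ (1 : K) ∈ I) (hd₀deg : d₀.degree = alphaNumber I) :
    ∃ (m : ℕ) (c : Fin t →₀ ℕ), 1 ≤ m ∧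
      (∀ k, Submodule.colon (I ^ (m + k)) (Ideal.span {monomial (k • d₀ + c) (1 : K)}) =
        Submodule.colon (I ^ m) (Ideal.span {monomial c (1 : K)})) ∧
      (Submodule.colon (I ^ m) (Ideal.span {monomial c (1 : K)})).IsPrime := by
  classical
  have hα : 0 < alphaNumber I := alpha_pos hmon hbot htop
  set S := MvPolynomial (Fin t) K
  set F : Set (Ideal S) := {Q | ∃ m c, 1 ≤ m ∧
    (∀ k, monomial (k • d₀ + c) (1 : K) ∉ I ^ (m + k)) ∧
    Q = Submodule.colon (I ^ m) (Ideal.span {monomial c (1 : K)})} with hF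
  have hFne : F.Nonempty := by
    refine ⟨_, 1, 0, le_refl 1, ?_, rfl⟩
    intro k hk
    rw [add_zero] at hk
    have := monomial_mem_pow_degree hmon hk
    rw [Finsupp.degree_smul] at this
    nlinarith [hd₀deg, hα]
  obtain ⟨Q, hQF, hQmax⟩ := (set_has_maximal_iff_noetherian.mpr inferInstance) F hFne
  obtain ⟨m, c, hm, hnot, hQ⟩ := hQF
  have hmax' : ∀ Q' ∈ F, Q ≤ Q' → Q' = Q := by
    intro Q' h1 h2
    by_contra hne
    exact hQmax Q' h1 (lt_of_le_of_ne h2 (Ne.symm hne))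
  have hu : ∀ k, monomial (k • d₀) (1 : K) ∈ I ^ k := by
    intro k
    have := Ideal.pow_mem_pow hd₀I k
    rwa [monomial_pow, one_pow] at this
  -- propagation of the colon ideal to higher powers
  have hprop : ∀ k, Submodule.colon (I ^ (m + k)) (Ideal.span {monomial (k • d₀ + c) (1 : K)})
      = Q := by
    intro k
    apply hmax'
    · refine ⟨m + k, k • d₀ + c, le_trans hm (Nat.le_add_right m k), ?_, rfl⟩
      intro k' hk'
      refine hnot (k + k') ?_
      rw [show (k + k') • d₀ + c = k' • d₀ + (k • d₀ + c) by rw [add_smul]; abel,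
        show m + (k + k') = m + k + k' by omega]
      exact hk'
    · rw [hQ]
      intro r hr
      rw [Ideal.mem_colon_span_singleton] at hr ⊢
      have h2 : r * monomial c 1 * monomial (k • d₀) 1 ∈ I ^ m * I ^ k :=
        Ideal.mul_mem_mul hr (hu k)
      rw [← pow_add] at h2
      rwa [mul_assoc, monomial_mul, mul_one, add_comm c (k • d₀)] at h2
  have hQtop : (1 : S) ∉ Q := by
    rw [hQ, Ideal.mem_colon_span_singleton, one_mul]
    have := hnot 0
    rw [zero_smul, zero_add, add_zero] at this
    exact this
  -- the "monomial prime" property of Q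
  have hMP : ∀ a b : Fin t →₀ ℕ, monomial (a + b) (1 : K) ∈ Q →
      monomial b (1 : K) ∉ Q → monomial a (1 : K) ∈ Q := by
    intro a b hab hb
    by_cases hcase : ∃ k, monomial (k • d₀ + (c + b)) (1 : K) ∈ I ^ (m + k)
    · obtain ⟨k, hk⟩ := hcase
      exfalso
      apply hb
      rw [← hprop k, Ideal.mem_colon_span_singleton, monomial_mul, mul_one,
        show b + (k • d₀ + c) = k • d₀ + (c + b) by abel]
      exact hk
    · push_neg at hcase
      have hQ'' : Submodule.colon (I ^ m) (Ideal.span {monomial (c + b) (1 : K)}) = Q := by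
        apply hmax'
        · exact ⟨m, c + b, hm, hcase, rfl⟩
        · rw [hQ]
          intro r hr
          rw [Ideal.mem_colon_span_singleton] at hr ⊢
          have := Ideal.mul_mem_right (monomial b 1) _ hr
          rwa [mul_assoc, monomial_mul, mul_one] at this
      rw [← hQ'', Ideal.mem_colon_span_singleton, monomial_mul, mul_one,
        show a + (c + b) = (a + b) + c by abel]
      have : monomial (a + b) (1 : K) * monomial c 1 ∈ I ^ m := by
        rw [← Ideal.mem_colon_span_singleton, ← hQ]
        exact hab
      rwa [monomial_mul, mul_one] at this
  -- Q is monomially closed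
  have hmonQ : ∀ f ∈ Q, ∀ d ∈ f.support, monomial d (1 : K) ∈ Q := by
    intro f hf d hd
    rw [hQ, Ideal.mem_colon_span_singleton] at hf ⊢
    rw [monomial_mul, mul_one]
    have hc : coeff (d + c) (f * monomial c 1) = coeff d f := by
      rw [coeff_mul_monomial, mul_one]
    have hds : d + c ∈ MvPolynomial.support (f * monomial c 1) :=
      mem_support_iff.2 (by rw [hc]; exact mem_support_iff.1 hd)
    exact monomial_mem (pow_monomial_ideal hmon m) hf hds
  -- Q is generated by the variables it contains
  set P : Ideal S := Ideal.span ((fun i => (X i : S)) '' {i | (X i : S) ∈ Q}) with hP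
  have hPQ : P ≤ Q := by
    rw [hP, Ideal.span_le]
    rintro f ⟨i, hi, rfl⟩
    exact hi
  have hXi : ∀ i : Fin t, (X i : S) = monomial (Finsupp.single i 1) (1 : K) := fun i => rfl
  have hmonP : ∀ n (d : Fin t →₀ ℕ), d.degree = n → monomial d (1 : K) ∈ Q →
      monomial d (1 : K) ∈ P := by
    intro n
    induction n using Nat.strong_induction_on with
    | _ n ih =>
      intro d hdeg hdQ
      rcases eq_or_ne d 0 with rfl | hd0
      · exfalso
        apply hQtop
        rwa [monomial_zero', MvPolynomial.C_1] at hdQ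
      · obtain ⟨i, hi⟩ : ∃ i, d i ≠ 0 := by
          by_contra hcon
          push_neg at hcon
          exact hd0 (Finsupp.ext fun j => hcon j)
        have hle : Finsupp.single i 1 ≤ d := Finsupp.single_le_iff.2 (Nat.one_le_iff_ne_zero.2 hi)
        set d' := d - Finsupp.single i 1 with hd'
        have hsplit : Finsupp.single i 1 + d' = d := add_tsub_cancel_of_le hle
        have hd'deg : d'.degree < n := by
          rw [← hdeg, ← hsplit, Finsupp.degree_add, degree_single]
          omega
        by_cases hXiQ : (X i : S) ∈ Q
        · have : monomial d (1 : K) = X i * monomial d' 1 := by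
            rw [hXi i, monomial_mul, mul_one, hsplit]
          rw [this]
          exact Ideal.mul_mem_right _ _ (Ideal.subset_span ⟨i, hXiQ, rfl⟩)
        · have hd'Q : monomial d' (1 : K) ∈ Q := by
            refine hMP d' (Finsupp.single i 1) ?_ (by rwa [← hXi i])
            rwa [show d' + Finsupp.single i 1 = d by rw [← hsplit]; abel]
          have hd'P : monomial d' (1 : K) ∈ P := ih _ hd'deg d' rfl hd'Q
          have : monomial d (1 : K) = X i * monomial d' 1 := by
            rw [hXi i, monomial_mul, mul_one, hsplit]
          rw [this]
          exact Ideal.mul_mem_left _ _ hd'P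
  have hQP : Q ≤ P := by
    intro f hf
    rw [f.as_sum]
    refine Submodule.sum_mem _ fun d hd => ?_
    have h1 : monomial d (1 : K) ∈ P := hmonP d.degree d rfl (hmonQ f hf d hd)
    have : monomial d (coeff d f) = MvPolynomial.C (coeff d f) * monomial d (1 : K) := by
      rw [MvPolynomial.C_mul_monomial, mul_one]
    rw [this]
    exact Ideal.mul_mem_left _ _ h1
  have hQeqP : Q = P := le_antisymm hQP hPQ
  -- an ideal generated by variables is prime
  have hPprime : P.IsPrime := by
    set φ : S →ₐ[K] S := aeval (fun i => if (X i : S) ∈ Q then 0 else X i) with hφ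
    have hker : P = RingHom.ker φ.toRingHom := by
      apply le_antisymm
      · rw [hP, Ideal.span_le]
        rintro f ⟨i, hi, rfl⟩
        have h0 : φ (X i) = 0 := by
          rw [hφ, aeval_X, if_pos (show (X i : S) ∈ Q from hi)]
        simpa only [SetLike.mem_coe, RingHom.mem_ker, AlgHom.toRingHom_eq_coe,
          RingHom.coe_coe] using h0
      · intro f hf
        have key : ∀ g : S, g - φ g ∈ P := by
          intro g
          induction g using MvPolynomial.induction_on with
          | C a => rw [hφ, aeval_C, algebraMap_eq, sub_self]; exact zero_mem _
          | add p q hp hq =>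
            rw [map_add]
            have : p + q - (φ p + φ q) = (p - φ p) + (q - φ q) := by ring
            rw [this]
            exact add_mem hp hq
          | mul_X p i hp =>
            rw [map_mul]
            by_cases hiQ : (X i : S) ∈ Q
            · rw [hφ]
              rw [show (aeval fun i => if (X i : S) ∈ Q then 0 else X i) (X i)
                  = (if (X i : S) ∈ Q then 0 else X i) from aeval_X _ i, if_pos hiQ,
                mul_zero, sub_zero]
              exact Ideal.mul_mem_left _ _ (Ideal.subset_span ⟨i, hiQ, rfl⟩)
            · rw [hφ]
              rw [show (aeval fun i => if (X i : S) ∈ Q then 0 else X i) (X i)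
                  = (if (X i : S) ∈ Q then 0 else X i) from aeval_X _ i, if_neg hiQ]
              have : p * X i - (aeval fun i => if (X i : S) ∈ Q then 0 else X i) p * X i
                  = (p - (aeval fun i => if (X i : S) ∈ Q then 0 else X i) p) * X i := by ring
              rw [this]
              exact Ideal.mul_mem_right _ _ hp
        have h2 := key f
        rw [RingHom.mem_ker] at hf
        rw [show φ f = φ.toRingHom f from rfl, hf, sub_zero] at h2
        exact h2
    rw [hker]
    exact RingHom.ker_isPrime _
  refine ⟨m, c, hm, fun k => by rw [hprop k, hQ], ?_⟩
  rw [← hQ, hQeqP]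
  exact hPprime

end VNumAux

open VNumAux in
/-- for a proper nonzero monomial ideal, v(I^{n+1}) ≤ n·α(I) + d eventually. -/
theorem vNumber_pow_linear_upper_bound {K : Type*} [Field K] (t : ℕ)
    (I : Ideal (MvPolynomial (Fin t) K))
    (hmon : IsMonomialIdeal I) (hbot : I ≠ ⊥) (htop : I ≠ ⊤) :
    ∃ n₀ d : ℕ, 0 < n₀ ∧ 0 < d ∧
      ∀ n, n₀ ≤ n → vNumber (I ^ (n + 1)) ≤ n * alphaNumber I + d := by
  obtain ⟨d₀, hd₀I, hd₀deg⟩ := exists_min_monomial hmon hbot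
  obtain ⟨m, c, hm, hprop, hprime⟩ := exists_stable_prime I hmon hbot htop hd₀I hd₀deg
  refine ⟨m, c.degree + 1, hm, Nat.succ_pos _, ?_⟩
  intro n hn
  set k := n + 1 - m with hk
  have hmk : m + k = n + 1 := by omega
  set f : MvPolynomial (Fin t) K := monomial (k • d₀ + c) (1 : K) with hf
  have hcolon : Submodule.colon (I ^ (n + 1)) (Ideal.span {f})
      = Submodule.colon (I ^ m) (Ideal.span {monomial c (1 : K)}) := by
    rw [← hmk]
    exact hprop k
  have hhom : f.IsHomogeneous (k * alphaNumber I + c.degree) := by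
    apply isHomogeneous_monomial
    rw [VNumAux.Finsupp.degree_add, VNumAux.Finsupp.degree_smul, hd₀deg]
  have hassoc : Submodule.colon (I ^ (n + 1)) (Ideal.span {f}) ∈
      associatedPrimes (MvPolynomial (Fin t) K) (MvPolynomial (Fin t) K ⧸ I ^ (n + 1)) := by
    rw [hcolon]
    refine ⟨hprime, Ideal.Quotient.mk (I ^ (n + 1)) f, ?_⟩
    rw [← hprime.radical]
    congr 1
    ext r
    rw [Submodule.mem_colon_singleton, ← hcolon, Ideal.mem_colon_span_singleton]
    have : r • (Ideal.Quotient.mk (I ^ (n + 1)) f) = Ideal.Quotient.mk (I ^ (n + 1)) (r * f) := by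
      exact (Submodule.Quotient.mk_smul (I ^ (n + 1)) r f).symm
    rw [this, Submodule.mem_bot, Ideal.Quotient.eq_zero_iff_mem]
  have hle : vNumber (I ^ (n + 1)) ≤ k * alphaNumber I + c.degree :=
    Nat.sInf_le ⟨f, hhom, hassoc⟩
  refine le_trans hle ?_
  have hkn : k ≤ n := by omega
  have := Nat.mul_le_mul_right (alphaNumber I) hkn
  omega
end
end

section
/- Let I ⊆ S = K[x_1,…,x_t] be an 𝔪-primary monomial ideal. Then v(I) ≤ reg(S/I). Since dim(S/I) = 0, here reg(S/I) equals the largest integer k such that the degree-k graded component of S/I is nonzero (equivalently, the largest degree of a monomial of S not belonging to I); that is, v(I) ≤ max{ k ≥ 0 : there exists a monomial of degree k not in I }. -/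
open MvPolynomial

noncomputable section

lemma mem_maxIdeal_iff {K : Type*} [Field K] {σ : Type*} (p : MvPolynomial σ K) :
    p ∈ maxIdeal K σ ↔ constantCoeff p = 0 := by
  rw [maxIdeal, ← Set.image_univ, mem_ideal_span_X_image]
  constructor
  · intro h
    rw [constantCoeff_eq]
    by_contra hc
    obtain ⟨i, _, hi⟩ := h 0 (mem_support_iff.mpr hc)
    simp at hi
  · intro h m hm
    rw [constantCoeff_eq] at h
    have hm0 : m ≠ 0 := by rintro rfl; exact mem_support_iff.mp hm h
    obtain ⟨i, hi⟩ := Finsupp.ne_iff.mp hm0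
    exact ⟨i, trivial, by simpa using hi⟩

lemma maxIdeal_isPrime {K : Type*} [Field K] (σ : Type*) : (maxIdeal K σ).IsPrime := by
  have h : maxIdeal K σ = RingHom.ker (constantCoeff : MvPolynomial σ K →+* K) := by
    ext p; rw [mem_maxIdeal_iff]; rfl
  rw [h]
  exact RingHom.ker_isPrime _

/-- for an 𝔪-primary monomial ideal, v(I) ≤ reg(S/I), where reg(S/I) is the
largest degree of a monomial not in I. -/
theorem vNumber_le_reg_m_primary {K : Type*} [Field K] (t : ℕ)
    (I : Ideal (MvPolynomial (Fin t) K))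
    (hmon : IsMonomialIdeal I) (hprim : I.radical = maxIdeal K (Fin t)) :
    vNumber I ≤ sSup {k : ℕ | ∃ a : Fin t →₀ ℕ, monomial a (1 : K) ∉ I ∧ (∑ i, a i) = k} := by
  set D : Set ℕ := {k : ℕ | ∃ a : Fin t →₀ ℕ, monomial a (1 : K) ∉ I ∧ (∑ i, a i) = k} with hD
  have h1I : (1 : MvPolynomial (Fin t) K) ∉ I := by
    intro h
    have h2 := Ideal.le_radical h
    rw [hprim, mem_maxIdeal_iff] at h2
    simp at h2
  have hD0 : (0 : ℕ) ∈ D := by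
    refine ⟨0, ?_, by simp⟩
    rw [monomial_zero', C_1]
    exact h1I
  have hradX : ∀ i : Fin t, ∃ n : ℕ, (X i : MvPolynomial (Fin t) K) ^ n ∈ I := by
    intro i
    have : (X i : MvPolynomial (Fin t) K) ∈ I.radical := by
      rw [hprim]; exact Ideal.subset_span ⟨i, rfl⟩
    exact this
  choose n hn using hradX
  have hbdd : BddAbove D := by
    refine ⟨∑ i, n i, fun k hk => ?_⟩
    obtain ⟨a, haI, rfl⟩ := hk
    refine Finset.sum_le_sum fun i _ => ?_
    by_contra hlt
    push_neg at hlt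
    apply haI
    have hsum : Finsupp.single i (n i) + (a - Finsupp.single i (n i)) = a := by
      ext j
      by_cases hji : j = i
      · subst hji
        simp [Nat.add_sub_cancel' hlt.le]
      · simp [Finsupp.single_apply, Ne.symm hji, hji]
    have heq : (monomial a (1 : K)) =
        (X i : MvPolynomial (Fin t) K) ^ (n i) * monomial (a - Finsupp.single i (n i)) 1 := by
      rw [X_pow_eq_monomial, monomial_mul, one_mul, hsum]
    rw [heq]
    exact I.mul_mem_right _ (hn i)
  obtain ⟨a, haI, hadeg⟩ := Nat.sSup_mem ⟨0, hD0⟩ hbdd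
  set f : MvPolynomial (Fin t) K := monomial a 1 with hf
  have hfhom : f.IsHomogeneous (sSup D) := by
    apply isHomogeneous_monomial
    show a.degree = sSup D
    rw [← hadeg, Finsupp.degree]
    exact (Finset.sum_subset (Finset.subset_univ _)
      (fun x _ hx => Finsupp.notMem_support_iff.mp hx))
  have hXi : ∀ i : Fin t, (X i : MvPolynomial (Fin t) K) = monomial (Finsupp.single i 1) 1 :=
    fun i => rfl
  have hXif : ∀ i : Fin t, X i * f ∈ I := by
    intro i
    by_contra hc
    have hmem : (sSup D + 1) ∈ D := by
      refine ⟨Finsupp.single i 1 + a, ?_, ?_⟩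
      · rwa [hf, hXi i, monomial_mul, one_mul] at hc
      · simp only [Finsupp.add_apply]
        rw [Finset.sum_add_distrib, hadeg]
        simp [Finsupp.single_apply, add_comm]
    have := le_csSup hbdd hmem
    omega
  have hle1 : maxIdeal K (Fin t) ≤ Submodule.colon I (Ideal.span {f}) := by
    rw [maxIdeal, Ideal.span_le]
    rintro _ ⟨i, rfl⟩
    exact Ideal.mem_colon_span_singleton.mpr (hXif i)
  have hcolon : Submodule.colon I (Ideal.span {f}) = maxIdeal K (Fin t) := by
    refine le_antisymm ?_ hle1
    intro g hg
    rw [mem_maxIdeal_iff]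
    by_contra hc
    have hgf : g * f ∈ I := Ideal.mem_colon_span_singleton.mp hg
    have hsub : g - C (constantCoeff g) ∈ maxIdeal K (Fin t) := by
      rw [mem_maxIdeal_iff]
      simp
    have hsf : (g - C (constantCoeff g)) * f ∈ I :=
      Ideal.mem_colon_span_singleton.mp (hle1 hsub)
    have hCf : C (constantCoeff g) * f ∈ I := by
      have := I.sub_mem hgf hsf
      simpa [sub_mul] using this
    apply haI
    have h2 := I.mul_mem_left (C (constantCoeff g)⁻¹) hCf
    rwa [← mul_assoc, ← C_mul, inv_mul_cancel₀ hc, C_1, one_mul] at h2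
  have hass : Submodule.colon I (Ideal.span {f}) ∈
      associatedPrimes (MvPolynomial (Fin t) K) (MvPolynomial (Fin t) K ⧸ I) := by
    refine ⟨hcolon ▸ maxIdeal_isPrime (K := K) (Fin t), ⟨Ideal.Quotient.mk I f, ?_⟩⟩
    suffices h : Submodule.colon I (Ideal.span {f}) =
        (⊥ : Submodule (MvPolynomial (Fin t) K) (MvPolynomial (Fin t) K ⧸ I)).colon
          {Ideal.Quotient.mk I f} by
      rw [← h, (hcolon ▸ maxIdeal_isPrime (K := K) (Fin t) :
        (Submodule.colon I (Ideal.span {f})).IsPrime).radical]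
    ext r
    rw [Submodule.mem_colon_singleton, Ideal.mem_colon_span_singleton, Submodule.mem_bot]
    change _ ↔ Ideal.Quotient.mk I r * Ideal.Quotient.mk I f = 0
    rw [← map_mul, Ideal.Quotient.eq_zero_iff_mem]
  exact Nat.sInf_le ⟨f, hfhom, hass⟩
end
end

section
/- Let D_1 and D_2 be finite simple graphs on disjoint vertex sets, each having at least one edge, and let D = D_1 * D_2 be their join. Then v(D) = min{ v(D_1), v(D_2) }. -/
open MvPolynomial

noncomputable section

/-- The join of two graphs on disjoint vertex sets: keep all edges of both graphs and add all
edges between the two vertex sets. -/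
def graphJoin {α β : Type*} (G : SimpleGraph α) (H : SimpleGraph β) : SimpleGraph (α ⊕ β) :=
  SimpleGraph.fromRel fun x y =>
    (∃ a b, x = Sum.inl a ∧ y = Sum.inl b ∧ G.Adj a b) ∨
    (∃ a b, x = Sum.inr a ∧ y = Sum.inr b ∧ H.Adj a b) ∨
    (∃ a b, x = Sum.inl a ∧ y = Sum.inr b)

namespace VJoin

variable {K : Type*} [Field K] {V : Type*}

/-- exponent vectors of edges -/
def eSet (G : SimpleGraph V) : Set (V →₀ ℕ) :=
  {d | ∃ i j, G.Adj i j ∧ d = Finsupp.single i 1 + Finsupp.single j 1}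

lemma X_mul_X_eq (i j : V) : (X i * X j : MvPolynomial V K) =
    monomial (Finsupp.single i 1 + Finsupp.single j 1) 1 := by
  rw [X, X, monomial_mul, one_mul]

lemma edgeIdeal_eq_span (G : SimpleGraph V) :
    edgeIdeal K G = Ideal.span ((fun a => (monomial a (1:K))) '' eSet G) := by
  unfold edgeIdeal eSet
  congr 1
  ext m
  simp only [Set.mem_setOf_eq, Set.mem_image]
  constructor
  · rintro ⟨i, j, h, rfl⟩
    exact ⟨_, ⟨i, j, h, rfl⟩, (X_mul_X_eq i j).symm⟩
  · rintro ⟨d, ⟨i, j, h, rfl⟩, rfl⟩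
    exact ⟨i, j, h, (X_mul_X_eq i j).symm⟩

lemma edge_le_iff {i j : V} (hij : i ≠ j) {d : V →₀ ℕ} :
    Finsupp.single i 1 + Finsupp.single j 1 ≤ d ↔ 1 ≤ d i ∧ 1 ≤ d j := by
  classical
  rw [Finsupp.le_def]
  constructor
  · intro h
    constructor
    · have := h i
      simpa [Finsupp.single_apply, hij.symm] using this
    · have := h j
      simpa [Finsupp.single_apply, hij] using this
  · rintro ⟨h1, h2⟩ s
    by_cases hsi : s = i
    · subst hsi
      simpa [Finsupp.single_apply, hij.symm] using h1
    · by_cases hsj : s = j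
      · subst hsj
        simpa [Finsupp.single_apply, hij, Ne.symm hsi] using h2
      · simp [Finsupp.single_apply, Ne.symm hsi, Ne.symm hsj]

lemma mem_edgeIdeal_iff {G : SimpleGraph V} {f : MvPolynomial V K} :
    f ∈ edgeIdeal K G ↔ ∀ d ∈ f.support, ∃ i j, G.Adj i j ∧ 1 ≤ d i ∧ 1 ≤ d j := by
  rw [edgeIdeal_eq_span, mem_ideal_span_monomial_image]
  constructor
  · intro h d hd
    obtain ⟨si, ⟨i, j, hadj, rfl⟩, hle⟩ := h d hd
    exact ⟨i, j, hadj, (edge_le_iff hadj.ne).1 hle⟩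
  · intro h d hd
    obtain ⟨i, j, hadj, h1, h2⟩ := h d hd
    exact ⟨_, ⟨i, j, hadj, rfl⟩, (edge_le_iff hadj.ne).2 ⟨h1, h2⟩⟩

lemma one_notMem (G : SimpleGraph V) : (1 : MvPolynomial V K) ∉ edgeIdeal K G := by
  rw [mem_edgeIdeal_iff]
  push_neg
  refine ⟨0, ?_, ?_⟩
  · rw [mem_support_iff]; simp
  · intro i j hadj h1
    simp at h1

lemma edgeIdeal_ne_top (G : SimpleGraph V) : edgeIdeal K G ≠ ⊤ := by
  intro h
  exact one_notMem G (h ▸ Submodule.mem_top)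

lemma X_notMem (G : SimpleGraph V) (v : V) : (X v : MvPolynomial V K) ∉ edgeIdeal K G := by
  rw [mem_edgeIdeal_iff]
  push_neg
  refine ⟨Finsupp.single v 1, ?_, ?_⟩
  · rw [mem_support_iff]
    simp [coeff_X]
  · intro i j hadj h1
    classical
    rw [Finsupp.single_apply] at h1 ⊢
    split_ifs at h1 with h
    · subst h
      rw [if_neg (by exact fun hc => hadj.ne (hc.symm ▸ rfl))]
      simp
    · simp at h1

lemma mul_gen_mem {G : SimpleGraph V} {i j : V} (h : G.Adj i j) :
    (X i * X j : MvPolynomial V K) ∈ edgeIdeal K G :=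
  Ideal.subset_span ⟨i, j, h, rfl⟩

lemma not_isPrime {G : SimpleGraph V} (hG : ∃ a b, G.Adj a b) :
    ¬ (edgeIdeal K G).IsPrime := by
  rintro hp
  obtain ⟨i, j, hadj⟩ := hG
  rcases hp.mem_or_mem (mul_gen_mem hadj) with h | h
  · exact X_notMem G i h
  · exact X_notMem G j h


section CommRingPart

variable {R : Type*} [CommRing R]

lemma colon_eq_annihilator (I : Ideal R) (f : R) :
    Submodule.colon I (Ideal.span {f}) =
      (Submodule.span R {(Ideal.Quotient.mk I f)}).annihilator := by
  ext r
  rw [Submodule.mem_annihilator_span_singleton, Ideal.mem_colon_span_singleton]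
  rw [show r • (Ideal.Quotient.mk I f) = Ideal.Quotient.mk I (r * f) from
    (Submodule.Quotient.mk_smul I r f).symm]
  rw [Ideal.Quotient.eq_zero_iff_mem]

lemma colon_mem_associatedPrimes {I : Ideal R} {f : R}
    (h : (Submodule.colon I (Ideal.span {f})).IsPrime) :
    Submodule.colon I (Ideal.span {f}) ∈ associatedPrimes R (R ⧸ I) :=
  ⟨h, ⟨Ideal.Quotient.mk I f, by rw [Submodule.bot_colon', ← colon_eq_annihilator, h.radical]⟩⟩

lemma colon_eq_top_of_mem {I : Ideal R} {f : R} (h : f ∈ I) :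
    Submodule.colon I (Ideal.span {f}) = ⊤ := by
  rw [eq_top_iff]
  intro r _
  rw [Ideal.mem_colon_span_singleton]
  exact Ideal.mul_mem_left I r h

lemma notMem_of_colon_isPrime {I : Ideal R} {f : R}
    (h : (Submodule.colon I (Ideal.span {f})).IsPrime) : f ∉ I := fun hf =>
  h.ne_top (colon_eq_top_of_mem hf)

lemma le_colon (I : Ideal R) (f : R) : I ≤ Submodule.colon I (Ideal.span {f}) := by
  intro r hr
  rw [Ideal.mem_colon_span_singleton]
  exact Ideal.mul_mem_right f I hr





end CommRingPart


lemma support_mul_monomial (m : V →₀ ℕ) (p : MvPolynomial V K) :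
    (p * monomial m 1).support = p.support.map (addRightEmbedding m) :=
  AddMonoidAlgebra.support_coeff_mul_single p _ (by simp) _

lemma eq_C_of_isHomogeneous_zero {f : MvPolynomial V K} (h : f.IsHomogeneous 0) :
    f = C (coeff 0 f) := by
  classical
  ext d
  by_cases hd : d = 0
  · subst hd; simp
  · rw [h.coeff_eq_zero (by rwa [Ne, Finsupp.degree_eq_zero_iff]), coeff_C, if_neg (Ne.symm hd)]

lemma degree_eq {f : MvPolynomial V K} {n : ℕ} (h : f.IsHomogeneous n) {d : V →₀ ℕ}
    (hd : coeff d f ≠ 0) : d.degree = n := by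
  rw [Finsupp.degree_eq_weight_one]
  exact h hd



lemma mem_colon_monomial {G : SimpleGraph V} {m : V →₀ ℕ} {f : MvPolynomial V K} :
    f ∈ Submodule.colon (edgeIdeal K G) (Ideal.span {(monomial m 1 : MvPolynomial V K)}) ↔
      ∀ d ∈ f.support, ∃ i j, G.Adj i j ∧ 1 ≤ d i + m i ∧ 1 ≤ d j + m j := by
  classical
  rw [Ideal.mem_colon_span_singleton, mem_edgeIdeal_iff, support_mul_monomial]
  rw [Finset.forall_mem_map]
  refine forall₂_congr fun d hd => ?_
  simp [addRightEmbedding, Finsupp.add_apply]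

lemma monomial_mem_colon_iff {G : SimpleGraph V} {m d : V →₀ ℕ} :
    (monomial d 1 : MvPolynomial V K) ∈
        Submodule.colon (edgeIdeal K G) (Ideal.span {(monomial m 1 : MvPolynomial V K)}) ↔
      ∃ i j, G.Adj i j ∧ 1 ≤ d i + m i ∧ 1 ≤ d j + m j := by
  classical
  rw [mem_colon_monomial]
  constructor
  · intro h
    exact h d (by rw [support_monomial, if_neg (one_ne_zero)]; exact Finset.mem_singleton_self d)
  · intro h e he
    rw [support_monomial, if_neg (one_ne_zero), Finset.mem_singleton] at he
    subst he; exact h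

lemma exists_X_mul_notMem [Nonempty V] {D : SimpleGraph V} {f : MvPolynomial V K}
    (hf : f ∉ edgeIdeal K D) : ∃ v, X v * f ∉ edgeIdeal K D := by
  classical
  rw [mem_edgeIdeal_iff] at hf
  push_neg at hf
  obtain ⟨d, hd, hdf⟩ := hf
  by_cases hd0 : d = 0
  · refine ⟨Classical.arbitrary V, fun hmem => ?_⟩
    rw [mem_edgeIdeal_iff] at hmem
    set v := Classical.arbitrary V
    have he : (Finsupp.single v 1 + d) ∈ (X v * f).support := by
      rw [support_X_mul, Finset.mem_map]
      exact ⟨d, hd, rfl⟩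
    obtain ⟨i, j, hadj, h1, h2⟩ := hmem _ he
    subst hd0
    simp only [add_zero, Finsupp.single_apply] at h1 h2
    have hi : v = i := by
      by_contra hvi
      rw [if_neg hvi] at h1; exact absurd h1 (by simp)
    have hj : v = j := by
      by_contra hvj
      rw [if_neg hvj] at h2; exact absurd h2 (by simp)
    exact hadj.ne (hi.symm.trans hj)
  · obtain ⟨v, hv⟩ := Finsupp.support_nonempty_iff.2 hd0
    refine ⟨v, fun hmem => ?_⟩
    rw [mem_edgeIdeal_iff] at hmem
    have he : (Finsupp.single v 1 + d) ∈ (X v * f).support := by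
      rw [support_X_mul, Finset.mem_map]
      exact ⟨d, hd, rfl⟩
    obtain ⟨i, j, hadj, h1, h2⟩ := hmem _ he
    have hdi : 1 ≤ d i := by
      by_cases hiv : i = v
      · subst hiv; exact Nat.one_le_iff_ne_zero.2 (Finsupp.mem_support_iff.1 hv)
      · rwa [Finsupp.add_apply, Finsupp.single_apply, if_neg (fun h => hiv h.symm),
          zero_add] at h1
    have hdj : 1 ≤ d j := by
      by_cases hjv : j = v
      · subst hjv; exact Nat.one_le_iff_ne_zero.2 (Finsupp.mem_support_iff.1 hv)
      · rwa [Finsupp.add_apply, Finsupp.single_apply, if_neg (fun h => hjv h.symm),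
          zero_add] at h2
    exact absurd (hdf i j hadj hdi) (by omega)

lemma theta_monomial (B : Set V) [DecidablePred (· ∈ B)] (d : V →₀ ℕ) (c : K)
    [Decidable (∀ i ∈ d.support, i ∉ B)] :
    aeval (fun v => if v ∈ B then (0 : MvPolynomial V K) else X v) (monomial d c) =
      if (∀ i ∈ d.support, i ∉ B) then monomial d c else 0 := by
  rw [aeval_monomial]
  by_cases hB : ∀ i ∈ d.support, i ∉ B
  · rw [if_pos hB, monomial_eq]
    congr 1
    refine Finsupp.prod_congr fun v hv => ?_
    rw [if_neg (hB v hv)]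
  · rw [if_neg hB]
    push_neg at hB
    obtain ⟨v, hv, hvB⟩ := hB
    rw [Finsupp.prod]
    rw [Finset.prod_eq_zero hv (by
      rw [if_pos hvB, zero_pow (Finsupp.mem_support_iff.1 hv)])]
    rw [mul_zero]

lemma theta_coeff (B : Set V) [DecidablePred (· ∈ B)] (x : MvPolynomial V K) (e : V →₀ ℕ)
    (he : ∀ i ∈ B, e i = 0) :
    coeff e (aeval (fun v => if v ∈ B then (0 : MvPolynomial V K) else X v) x) = coeff e x := by
  classical
  conv_lhs => rw [x.as_sum]
  rw [map_sum, coeff_sum]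
  have : ∀ d ∈ x.support,
      coeff e (aeval (fun v => if v ∈ B then (0 : MvPolynomial V K) else X v)
        (monomial d (coeff d x))) = if d = e then coeff d x else 0 := by
    intro d hd
    rw [theta_monomial]
    by_cases hBd : ∀ i ∈ d.support, i ∉ B
    · rw [if_pos hBd, coeff_monomial]
    · rw [if_neg hBd, coeff_zero, if_neg ?_]
      rintro rfl
      exact hBd fun i hi hiB => Finsupp.mem_support_iff.1 hi (he i hiB)
  rw [Finset.sum_congr rfl this, Finset.sum_ite_eq' x.support e (fun d => coeff d x)]
  by_cases hx : e ∈ x.support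
  · rw [if_pos hx]
  · rw [if_neg hx, eq_comm]
    exact notMem_support_iff.1 hx

lemma isPrime_span_X_image (B : Set V) :
    (Ideal.span (X '' B : Set (MvPolynomial V K))).IsPrime := by
  classical
  constructor
  · intro h
    have h1 : (1 : MvPolynomial V K) ∈ Ideal.span (X '' B : Set (MvPolynomial V K)) :=
      h ▸ Submodule.mem_top
    rw [mem_ideal_span_X_image] at h1
    obtain ⟨i, _, hi⟩ := h1 0 (by rw [mem_support_iff]; simp)
    simp at hi
  · intro x y hxy
    by_contra hcon
    push_neg at hcon
    obtain ⟨hx, hy⟩ := hcon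
    rw [mem_ideal_span_X_image] at hx hy
    push_neg at hx hy
    obtain ⟨dx, hdx, hdxB⟩ := hx
    obtain ⟨dy, hdy, hdyB⟩ := hy
    set θ : MvPolynomial V K →ₐ[K] MvPolynomial V K :=
      aeval (fun v => if v ∈ B then (0 : MvPolynomial V K) else X v) with hθ
    have hx0 : θ x ≠ 0 := fun h0 => by
      have := theta_coeff B x dx hdxB
      rw [show (aeval fun v => if v ∈ B then (0 : MvPolynomial V K) else X v) x = θ x from rfl,
        h0] at this
      rw [coeff_zero] at this
      exact mem_support_iff.1 hdx this.symm
    have hy0 : θ y ≠ 0 := fun h0 => by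
      have := theta_coeff B y dy hdyB
      rw [show (aeval fun v => if v ∈ B then (0 : MvPolynomial V K) else X v) y = θ y from rfl,
        h0] at this
      rw [coeff_zero] at this
      exact mem_support_iff.1 hdy this.symm
    have hmap : θ (x * y) = 0 := by
      have hmem : θ (x * y) ∈ Ideal.map θ.toRingHom
          (Ideal.span (X '' B : Set (MvPolynomial V K))) :=
        Ideal.mem_map_of_mem _ hxy
      rw [Ideal.map_span] at hmem
      have hle : Ideal.span (θ.toRingHom '' (X '' B : Set (MvPolynomial V K))) ≤ ⊥ := by
        rw [Ideal.span_le]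
        rintro _ ⟨_, ⟨v, hv, rfl⟩, rfl⟩
        simp only [AlgHom.toRingHom_eq_coe, RingHom.coe_coe, SetLike.mem_coe,
          Ideal.mem_bot, hθ, aeval_X]
        rw [if_pos hv]
      exact (Submodule.mem_bot _).1 (hle hmem)
    rw [map_mul] at hmap
    exact mul_ne_zero hx0 hy0 hmap

lemma eq_span_X_of_monomialPrime (J : Ideal (MvPolynomial V K))
    (hproper : (1 : MvPolynomial V K) ∉ J)
    (hmono : ∀ f ∈ J, ∀ d ∈ f.support, (monomial d 1 : MvPolynomial V K) ∈ J)
    (hmp : ∀ d e : V →₀ ℕ, (monomial (d + e) 1 : MvPolynomial V K) ∈ J →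
        (monomial d 1 : MvPolynomial V K) ∈ J ∨ (monomial e 1 : MvPolynomial V K) ∈ J) :
    J = Ideal.span (X '' {v | X v ∈ J} : Set (MvPolynomial V K)) := by
  classical
  have hXpow : ∀ (b : ℕ) (a : V), (monomial (Finsupp.single a b) 1 : MvPolynomial V K) ∈ J →
      b ≠ 0 → (X a : MvPolynomial V K) ∈ J := by
    intro b
    induction b with
    | zero => intro a _ h; exact absurd rfl h
    | succ n ih =>
      intro a h _
      rw [show Finsupp.single a (n + 1) = Finsupp.single a 1 + Finsupp.single a n by
        rw [← Finsupp.single_add, add_comm]] at h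
      rcases hmp _ _ h with h1 | h1
      · rwa [X]
      · by_cases hn : n = 0
        · subst hn
          rw [Finsupp.single_zero, monomial_zero'] at h1
          simp only [map_one] at h1
          exact absurd h1 hproper
        · exact ih a h1 hn
  have hmonoMem : ∀ d : V →₀ ℕ, (monomial d 1 : MvPolynomial V K) ∈ J →
      (monomial d 1 : MvPolynomial V K) ∈
        Ideal.span (X '' {v | X v ∈ J} : Set (MvPolynomial V K)) := by
    intro d
    induction d using Finsupp.induction with
    | zero =>
      intro h
      rw [monomial_zero'] at h
      simp only [map_one] at h
      exact absurd h hproper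
    | single_add a b f ha hb ih =>
      intro h
      rcases hmp _ _ h with h1 | h1
      · have hXa : (X a : MvPolynomial V K) ∈ J := hXpow b a h1 hb
        have hb1 : 1 + (b - 1) = b := by omega
        have : (monomial (Finsupp.single a b + f) 1 : MvPolynomial V K) =
            X a * monomial (Finsupp.single a (b - 1) + f) 1 := by
          rw [X, monomial_mul, one_mul, ← add_assoc, ← Finsupp.single_add, hb1]
        rw [this]
        exact Ideal.mul_mem_right _ _ (Ideal.subset_span ⟨a, hXa, rfl⟩)
      · have : (monomial (Finsupp.single a b + f) 1 : MvPolynomial V K) =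
            monomial (Finsupp.single a b) 1 * monomial f 1 := by
          rw [monomial_mul, one_mul]
        rw [this]
        exact Ideal.mul_mem_left _ _ (ih h1)
  refine le_antisymm ?_ ?_
  · intro f hf
    rw [f.as_sum]
    refine Ideal.sum_mem _ fun d hd => ?_
    have : (monomial d (coeff d f) : MvPolynomial V K) = C (coeff d f) * monomial d 1 := by
      rw [C_mul_monomial, mul_one]
    rw [this]
    exact Ideal.mul_mem_left _ _ (hmonoMem d (hmono f hf d hd))
  · rw [Ideal.span_le]
    rintro _ ⟨v, hv, rfl⟩
    exact hv

lemma exists_monomial_colon_prime [Fintype V] (G : SimpleGraph V) :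
    ∃ m : V →₀ ℕ, (Submodule.colon (edgeIdeal K G)
      (Ideal.span {(monomial m 1 : MvPolynomial V K)})).IsPrime := by
  classical
  set I := edgeIdeal K G with hI
  set T : Set (Ideal (MvPolynomial V K)) :=
    {J | ∃ m : V →₀ ℕ, (monomial m 1 : MvPolynomial V K) ∉ I ∧
      J = Submodule.colon I (Ideal.span {(monomial m 1 : MvPolynomial V K)})} with hT
  have hTne : T.Nonempty := by
    refine ⟨Submodule.colon I (Ideal.span {(monomial 0 1 : MvPolynomial V K)}), 0, ?_, rfl⟩
    rw [monomial_zero']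
    simpa using one_notMem (K := K) G
  have hNoeth : IsNoetherianRing (MvPolynomial V K) := inferInstance
  obtain ⟨J, hJT, hJmax⟩ := set_has_maximal_iff_noetherian.mpr hNoeth T hTne
  obtain ⟨m₀, hm₀, rfl⟩ := hJT
  refine ⟨m₀, ?_, ?_⟩
  · -- ne_top
    intro htop
    have h1 : (1 : MvPolynomial V K) ∈
        Submodule.colon I (Ideal.span {(monomial m₀ 1 : MvPolynomial V K)}) :=
      htop ▸ Submodule.mem_top
    rw [Ideal.mem_colon_span_singleton, one_mul] at h1
    exact hm₀ h1
  · -- mem_or_mem via span X '' B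
    have hproper : (1 : MvPolynomial V K) ∉
        Submodule.colon I (Ideal.span {(monomial m₀ 1 : MvPolynomial V K)}) := by
      intro h1
      rw [Ideal.mem_colon_span_singleton, one_mul] at h1
      exact hm₀ h1
    have hmono : ∀ f ∈ Submodule.colon I (Ideal.span {(monomial m₀ 1 : MvPolynomial V K)}),
        ∀ d ∈ f.support, (monomial d 1 : MvPolynomial V K) ∈
          Submodule.colon I (Ideal.span {(monomial m₀ 1 : MvPolynomial V K)}) := by
      intro f hf d hd
      rw [hI] at hf ⊢
      rw [mem_colon_monomial] at hf
      rw [monomial_mem_colon_iff]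
      exact hf d hd
    have hmp : ∀ d e : V →₀ ℕ,
        (monomial (d + e) 1 : MvPolynomial V K) ∈
          Submodule.colon I (Ideal.span {(monomial m₀ 1 : MvPolynomial V K)}) →
        (monomial d 1 : MvPolynomial V K) ∈
          Submodule.colon I (Ideal.span {(monomial m₀ 1 : MvPolynomial V K)}) ∨
        (monomial e 1 : MvPolynomial V K) ∈
          Submodule.colon I (Ideal.span {(monomial m₀ 1 : MvPolynomial V K)}) := by
      intro d e hde
      by_cases he : (monomial e 1 : MvPolynomial V K) ∈
          Submodule.colon I (Ideal.span {(monomial m₀ 1 : MvPolynomial V K)})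
      · exact Or.inr he
      refine Or.inl ?_
      have hem₀ : (monomial (e + m₀) 1 : MvPolynomial V K) ∉ I := by
        intro hmem
        apply he
        rw [Ideal.mem_colon_span_singleton, monomial_mul, one_mul]
        exact hmem
      have hJ'T : Submodule.colon I (Ideal.span {(monomial (e + m₀) 1 : MvPolynomial V K)}) ∈ T :=
        ⟨e + m₀, hem₀, rfl⟩
      have hle : Submodule.colon I (Ideal.span {(monomial m₀ 1 : MvPolynomial V K)}) ≤
          Submodule.colon I (Ideal.span {(monomial (e + m₀) 1 : MvPolynomial V K)}) := by
        intro w hw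
        rw [Ideal.mem_colon_span_singleton] at hw ⊢
        have : w * (monomial (e + m₀) 1 : MvPolynomial V K) =
            (w * monomial m₀ 1) * monomial e 1 := by
          rw [mul_assoc, monomial_mul, one_mul, add_comm]
        rw [this]
        exact Ideal.mul_mem_right _ _ hw
      have heq : Submodule.colon I (Ideal.span {(monomial m₀ 1 : MvPolynomial V K)}) =
          Submodule.colon I (Ideal.span {(monomial (e + m₀) 1 : MvPolynomial V K)}) := by
        by_contra hne
        exact hJmax _ hJ'T (lt_of_le_of_ne hle hne)
      rw [heq, Ideal.mem_colon_span_singleton]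
      have : (monomial d 1 : MvPolynomial V K) * monomial (e + m₀) 1 =
          (monomial (d + e) 1) * monomial m₀ 1 := by
        simp only [monomial_mul, one_mul, mul_one, add_assoc]
      rw [this]
      rw [Ideal.mem_colon_span_singleton] at hde
      exact hde
    have hspan := eq_span_X_of_monomialPrime _ hproper hmono hmp
    intro x y hxy
    rw [hspan] at hxy ⊢
    exact (isPrime_span_X_image _).mem_or_mem hxy

lemma vSet_nonempty [Fintype V] (G : SimpleGraph V) :
    {k : ℕ | ∃ f : MvPolynomial V K, f.IsHomogeneous k ∧
      Submodule.colon (edgeIdeal K G) (Ideal.span {f}) ∈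
        associatedPrimes (MvPolynomial V K) (MvPolynomial V K ⧸ edgeIdeal K G)}.Nonempty := by
  obtain ⟨m, hm⟩ := exists_monomial_colon_prime (K := K) G
  exact ⟨m.degree, monomial m 1, isHomogeneous_monomial 1 rfl,
    colon_mem_associatedPrimes hm⟩

section KillCompl

variable {γ : Type*} {u : γ → V} (hu : Function.Injective u)

lemma killCompl_X_of_mem (a : γ) : killCompl hu (X (u a) : MvPolynomial V K) = X a := by
  have := killCompl_rename_app hu (X a : MvPolynomial γ K)
  rwa [rename_X] at this

lemma killCompl_X_of_notMem {v : V} (hv : v ∉ Set.range u) :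
    killCompl hu (X v : MvPolynomial V K) = 0 := by
  rw [killCompl, aeval_X, dif_neg hv]

/-- Lemma E -/
lemma sub_psi_mem (g : MvPolynomial V K) :
    g - rename u (killCompl hu g) ∈
      Ideal.span (X '' {v : V | v ∉ Set.range u} : Set (MvPolynomial V K)) := by
  induction g using MvPolynomial.induction_on with
  | C c =>
    rw [killCompl_C, rename_C, sub_self]
    exact Ideal.zero_mem _
  | add p q hp hq =>
    rw [map_add, map_add]
    have : p + q - (rename u (killCompl hu p) + rename u (killCompl hu q)) =
        (p - rename u (killCompl hu p)) + (q - rename u (killCompl hu q)) := by ring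
    rw [this]
    exact Ideal.add_mem _ hp hq
  | mul_X p i hp =>
    rw [map_mul, map_mul]
    by_cases hi : i ∈ Set.range u
    · obtain ⟨a, rfl⟩ := hi
      rw [killCompl_X_of_mem hu, rename_X]
      have : p * X (u a) - rename u (killCompl hu p) * X (u a) =
          (p - rename u (killCompl hu p)) * X (u a) := by ring
      rw [this]
      exact Ideal.mul_mem_right _ _ hp
    · rw [killCompl_X_of_notMem hu hi, map_zero, mul_zero, sub_zero]
      exact Ideal.mul_mem_left _ _ (Ideal.subset_span ⟨i, hi, rfl⟩)

lemma rename_mem_span_X_range (hu : Function.Injective u) {f : MvPolynomial γ K} {k : ℕ}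
    (hf : f.IsHomogeneous k) (hk : k ≠ 0) :
    rename u f ∈ Ideal.span (X '' Set.range u : Set (MvPolynomial V K)) := by
  classical
  rw [mem_ideal_span_X_image]
  intro m hm
  rw [support_rename_of_injective hu, Finset.mem_image] at hm
  obtain ⟨d, hd, rfl⟩ := hm
  have hd0 : d ≠ 0 := by
    intro h0
    have := degree_eq hf (mem_support_iff.1 hd)
    rw [h0, map_zero] at this
    exact hk this.symm
  obtain ⟨a, ha⟩ := Finsupp.support_nonempty_iff.2 hd0
  exact ⟨u a, ⟨a, rfl⟩, by
    rw [Finsupp.mapDomain_apply hu]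
    exact Finsupp.mem_support_iff.1 ha⟩

lemma killCompl_isHomogeneous {g : MvPolynomial V K} {k : ℕ} (hg : g.IsHomogeneous k) :
    (killCompl hu g).IsHomogeneous k := by
  classical
  rw [g.as_sum, map_sum]
  apply IsHomogeneous.sum
  intro d hd
  have hdeg : d.degree = k := degree_eq hg (mem_support_iff.1 hd)
  rw [killCompl, aeval_monomial]
  have hprod : (d.prod fun v n =>
      (if h : v ∈ Set.range u then (X ((Equiv.ofInjective u hu).symm ⟨v, h⟩) : MvPolynomial γ K)
        else 0) ^ n).IsHomogeneous k := by
    rw [Finsupp.prod, ← hdeg, Finsupp.degree]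
    refine IsHomogeneous.prod d.support
      (fun v => (if h : v ∈ Set.range u
        then (X ((Equiv.ofInjective u hu).symm ⟨v, h⟩) : MvPolynomial γ K) else 0) ^ d v)
      (fun v => d v) (fun v hv => ?_)
    by_cases h : v ∈ Set.range u
    · rw [dif_pos h]
      exact isHomogeneous_X_pow _ _
    · rw [dif_neg h, zero_pow (Finsupp.mem_support_iff.1 hv)]
      exact isHomogeneous_zero _ _ _
  have := (isHomogeneous_C (σ := γ) (coeff d g)).mul hprod
  rw [zero_add] at this
  rwa [algebraMap_eq]

end KillCompl

section Master

variable {γ : Type*} {S : SimpleGraph γ} {D : SimpleGraph V} {u : γ → V}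

/-- The set whose infimum is the v-number. -/
def vSet {σ : Type*} (I : Ideal (MvPolynomial σ K)) : Set ℕ :=
  {k : ℕ | ∃ f : MvPolynomial σ K, f.IsHomogeneous k ∧
    Submodule.colon I (Ideal.span {f}) ∈
      associatedPrimes (MvPolynomial σ K) (MvPolynomial σ K ⧸ I)}

lemma map_rename_le (hAdjF : ∀ i j, S.Adj i j → D.Adj (u i) (u j)) :
    Ideal.map (rename u : MvPolynomial γ K →ₐ[K] MvPolynomial V K) (edgeIdeal K S) ≤
      edgeIdeal K D := by
  rw [Ideal.map_le_iff_le_comap]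
  rw [show edgeIdeal K S = Ideal.span {m | ∃ i j, S.Adj i j ∧ m = X i * X j} from rfl,
    Ideal.span_le]
  rintro m ⟨i, j, hij, rfl⟩
  rw [SetLike.mem_coe, Ideal.mem_comap, map_mul, rename_X, rename_X]
  exact mul_gen_mem (hAdjF i j hij)

lemma rename_mem_edgeIdeal (hAdjF : ∀ i j, S.Adj i j → D.Adj (u i) (u j))
    {f : MvPolynomial γ K} (hf : f ∈ edgeIdeal K S) :
    rename u f ∈ edgeIdeal K D :=
  map_rename_le hAdjF (Ideal.mem_map_of_mem _ hf)

lemma map_killCompl_le (hu : Function.Injective u)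
    (hAdjB : ∀ a b, D.Adj (u a) (u b) → S.Adj a b) :
    Ideal.map (killCompl hu : MvPolynomial V K →ₐ[K] MvPolynomial γ K) (edgeIdeal K D) ≤
      edgeIdeal K S := by
  rw [Ideal.map_le_iff_le_comap]
  rw [show edgeIdeal K D = Ideal.span {m | ∃ i j, D.Adj i j ∧ m = X i * X j} from rfl,
    Ideal.span_le]
  rintro m ⟨i, j, hij, rfl⟩
  rw [SetLike.mem_coe, Ideal.mem_comap, map_mul]
  by_cases hi : i ∈ Set.range u
  · by_cases hj : j ∈ Set.range u
    · obtain ⟨a, rfl⟩ := hi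
      obtain ⟨b, rfl⟩ := hj
      rw [killCompl_X_of_mem hu, killCompl_X_of_mem hu]
      exact mul_gen_mem (hAdjB a b hij)
    · rw [killCompl_X_of_notMem hu hj, mul_zero]
      exact Ideal.zero_mem _
  · rw [killCompl_X_of_notMem hu hi, zero_mul]
    exact Ideal.zero_mem _

lemma killCompl_mem_edgeIdeal (hu : Function.Injective u)
    (hAdjB : ∀ a b, D.Adj (u a) (u b) → S.Adj a b)
    {f : MvPolynomial V K} (hf : f ∈ edgeIdeal K D) :
    killCompl hu f ∈ edgeIdeal K S :=
  map_killCompl_le hu hAdjB (Ideal.mem_map_of_mem _ hf)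

lemma cross_mul_le (hu : Function.Injective u)
    (hcross : ∀ v, v ∉ Set.range u → ∀ i, D.Adj v (u i)) :
    Ideal.span (X '' {v : V | v ∉ Set.range u} : Set (MvPolynomial V K)) *
      Ideal.span (X '' Set.range u : Set (MvPolynomial V K)) ≤ edgeIdeal K D := by
  rw [Ideal.span_mul_span', Ideal.span_le]
  rintro m ⟨x1, ⟨v, hv, rfl⟩, x2, ⟨w, ⟨i, rfl⟩, rfl⟩, rfl⟩
  exact mul_gen_mem (hcross v hv i)


lemma cross_mul_le' (hu : Function.Injective u)
    (hcross : ∀ v, v ∉ Set.range u → ∀ i, D.Adj v (u i)) (i : γ)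
    {r : MvPolynomial V K}
    (hr : r ∈ Ideal.span (X '' {v : V | v ∉ Set.range u} : Set (MvPolynomial V K))) :
    X (u i) * r ∈ edgeIdeal K D := by
  have hle : Ideal.span ({X (u i)} : Set (MvPolynomial V K)) *
      Ideal.span (X '' {v : V | v ∉ Set.range u} : Set (MvPolynomial V K)) ≤ edgeIdeal K D := by
    rw [Ideal.span_mul_span', Ideal.span_le]
    rintro m ⟨x1, hx1, x2, ⟨v, hv, rfl⟩, rfl⟩
    rw [Set.mem_singleton_iff] at hx1
    subst hx1
    exact mul_gen_mem ((hcross v hv i).symm)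
  exact hle (Ideal.mul_mem_mul (Ideal.mem_span_singleton_self _) hr)

lemma masterU (hu : Function.Injective u)
    (hAdjF : ∀ i j, S.Adj i j → D.Adj (u i) (u j))
    (hAdjB : ∀ a b, D.Adj (u a) (u b) → S.Adj a b)
    (hcross : ∀ v, v ∉ Set.range u → ∀ i, D.Adj v (u i))
    (hS : ∃ a b, S.Adj a b) {k : ℕ}
    (hk : k ∈ vSet (edgeIdeal K S)) : k ∈ vSet (edgeIdeal K D) := by
  obtain ⟨f, hf, hassoc⟩ := hk
  have hP : (Submodule.colon (edgeIdeal K S) (Ideal.span {f})).IsPrime := hassoc.1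
  have hfI : f ∉ edgeIdeal K S := notMem_of_colon_isPrime hP
  have hk0 : k ≠ 0 := by
    rintro rfl
    have hfC := eq_C_of_isHomogeneous_zero hf
    by_cases hc : coeff 0 f = 0
    · rw [hc, map_zero] at hfC
      exact hfI (hfC ▸ Ideal.zero_mem _)
    · have hunit : IsUnit f := hfC ▸ (IsUnit.map C (isUnit_iff_ne_zero.2 hc))
      have htop : Ideal.span {f} = ⊤ := Ideal.span_singleton_eq_top.2 hunit
      rw [htop, Submodule.top_coe, Submodule.colon_univ] at hP
      exact not_isPrime hS hP
  refine ⟨rename u f, hf.rename_isHomogeneous, ?_⟩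
  have heq : Submodule.colon (edgeIdeal K D) (Ideal.span {rename u f}) =
      Ideal.comap (killCompl hu : MvPolynomial V K →ₐ[K] MvPolynomial γ K)
        (Submodule.colon (edgeIdeal K S) (Ideal.span {f})) := by
    ext g
    rw [Ideal.mem_colon_span_singleton, Ideal.mem_comap, Ideal.mem_colon_span_singleton]
    constructor
    · intro h
      have := killCompl_mem_edgeIdeal hu hAdjB h
      rwa [map_mul, killCompl_rename_app] at this
    · intro h
      have h2 : rename u (killCompl hu g * f) ∈ edgeIdeal K D :=
        rename_mem_edgeIdeal hAdjF h
      have h3 : (g - rename u (killCompl hu g)) * rename u f ∈ edgeIdeal K D :=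
        cross_mul_le hu hcross
          (Ideal.mul_mem_mul (sub_psi_mem hu g) (rename_mem_span_X_range hu hf hk0))
      have hsplit : g * rename u f =
          (g - rename u (killCompl hu g)) * rename u f +
            rename u (killCompl hu g) * rename u f := by ring
      rw [hsplit]
      refine Ideal.add_mem _ h3 ?_
      rwa [← map_mul]
  haveI := hP
  have hprime : (Ideal.comap (killCompl hu : MvPolynomial V K →ₐ[K] MvPolynomial γ K)
      (Submodule.colon (edgeIdeal K S) (Ideal.span {f}))).IsPrime :=
    Ideal.IsPrime.comap _
  apply colon_mem_associatedPrimes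
  rw [heq]
  exact hprime

lemma masterL (hu : Function.Injective u)
    (hAdjF : ∀ i j, S.Adj i j → D.Adj (u i) (u j))
    (hAdjB : ∀ a b, D.Adj (u a) (u b) → S.Adj a b)
    (hcross : ∀ v, v ∉ Set.range u → ∀ i, D.Adj v (u i))
    {k : ℕ} {F : MvPolynomial V K} (hF : F.IsHomogeneous k)
    (hassoc : Submodule.colon (edgeIdeal K D) (Ideal.span {F}) ∈
      associatedPrimes (MvPolynomial V K) (MvPolynomial V K ⧸ edgeIdeal K D))
    (hi₀ : ∃ i₀, (X (u i₀) : MvPolynomial V K) ∉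
      Submodule.colon (edgeIdeal K D) (Ideal.span {F})) :
    k ∈ vSet (edgeIdeal K S) := by
  have hQ : (Submodule.colon (edgeIdeal K D) (Ideal.span {F})).IsPrime := hassoc.1
  obtain ⟨i₀, hi₀⟩ := hi₀
  refine ⟨killCompl hu F, killCompl_isHomogeneous hu hF, ?_⟩
  have heq : Submodule.colon (edgeIdeal K S) (Ideal.span {killCompl hu F}) =
      Ideal.comap (rename u : MvPolynomial γ K →ₐ[K] MvPolynomial V K)
        (Submodule.colon (edgeIdeal K D) (Ideal.span {F})) := by
    ext p
    rw [Ideal.mem_colon_span_singleton, Ideal.mem_comap, Ideal.mem_colon_span_singleton]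
    constructor
    · intro h
      have h2 : rename u (p * killCompl hu F) ∈ edgeIdeal K D :=
        rename_mem_edgeIdeal hAdjF h
      have h3 : X (u i₀) * (rename u p * (F - rename u (killCompl hu F))) ∈ edgeIdeal K D := by
        refine cross_mul_le' hu hcross i₀ ?_
        exact Ideal.mul_mem_left _ _ (sub_psi_mem hu F)
      have hclaim : (X (u i₀) * rename u p) * F ∈ edgeIdeal K D := by
        have hsplit : (X (u i₀) * rename u p) * F =
            X (u i₀) * (rename u p * (F - rename u (killCompl hu F))) +
              X (u i₀) * rename u (p * killCompl hu F) := by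
          rw [map_mul]; ring
        rw [hsplit]
        exact Ideal.add_mem _ h3 (Ideal.mul_mem_left _ _ h2)
      have hmem : X (u i₀) * rename u p ∈
          Submodule.colon (edgeIdeal K D) (Ideal.span {F}) := by
        rw [Ideal.mem_colon_span_singleton]; exact hclaim
      rcases hQ.mem_or_mem hmem with hmem' | hmem'
      · exact absurd hmem' hi₀
      · rwa [Ideal.mem_colon_span_singleton] at hmem'
    · intro h
      have := killCompl_mem_edgeIdeal hu hAdjB h
      rwa [map_mul, killCompl_rename_app] at this
  haveI := hQ
  have hprime : (Ideal.comap (rename u : MvPolynomial γ K →ₐ[K] MvPolynomial V K)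
      (Submodule.colon (edgeIdeal K D) (Ideal.span {F}))).IsPrime :=
    Ideal.IsPrime.comap _
  apply colon_mem_associatedPrimes
  rw [heq]
  exact hprime

end Master

section Join

variable {α β : Type*} {G : SimpleGraph α} {H : SimpleGraph β}

lemma adj_inl_inl {a b : α} : (graphJoin G H).Adj (Sum.inl a) (Sum.inl b) ↔ G.Adj a b := by
  simp only [graphJoin, SimpleGraph.fromRel_adj, ne_eq, Sum.inl.injEq]
  constructor
  · rintro ⟨hne, (⟨x, y, hx, hy, hadj⟩ | ⟨x, y, hx, hy, hadj⟩ | ⟨x, y, hx, hy⟩) |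
      (⟨x, y, hx, hy, hadj⟩ | ⟨x, y, hx, hy, hadj⟩ | ⟨x, y, hx, hy⟩)⟩
    · cases hx; cases hy; exact hadj
    · exact absurd hx (by simp)
    · exact absurd hy (by simp)
    · cases hx; cases hy; exact hadj.symm
    · exact absurd hx (by simp)
    · exact absurd hy (by simp)
  · intro h
    exact ⟨fun he => h.ne (by rw [he]), Or.inl (Or.inl ⟨a, b, rfl, rfl, h⟩)⟩

lemma adj_inr_inr {a b : β} : (graphJoin G H).Adj (Sum.inr a) (Sum.inr b) ↔ H.Adj a b := by
  simp only [graphJoin, SimpleGraph.fromRel_adj, ne_eq, Sum.inr.injEq]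
  constructor
  · rintro ⟨hne, (⟨x, y, hx, hy, hadj⟩ | ⟨x, y, hx, hy, hadj⟩ | ⟨x, y, hx, hy⟩) |
      (⟨x, y, hx, hy, hadj⟩ | ⟨x, y, hx, hy, hadj⟩ | ⟨x, y, hx, hy⟩)⟩
    · exact absurd hx (by simp)
    · cases hx; cases hy; exact hadj
    · exact absurd hx (by simp)
    · exact absurd hx (by simp)
    · cases hx; cases hy; exact hadj.symm
    · exact absurd hx (by simp)
  · intro h
    exact ⟨fun he => h.ne (by rw [he]), Or.inl (Or.inr (Or.inl ⟨a, b, rfl, rfl, h⟩))⟩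

lemma adj_inl_inr (a : α) (b : β) : (graphJoin G H).Adj (Sum.inl a) (Sum.inr b) := by
  rw [graphJoin, SimpleGraph.fromRel_adj]
  exact ⟨by simp, Or.inl (Or.inr (Or.inr ⟨a, b, rfl, rfl⟩))⟩

end Join

end VJoin

open VJoin

/-- v(D₁ * D₂) = min{v(D₁), v(D₂)}. -/
theorem vNumber_join {K : Type*} [Field K] {α β : Type*} [Fintype α] [Fintype β]
    (G : SimpleGraph α) (H : SimpleGraph β)
    (hG : ∃ a b, G.Adj a b) (hH : ∃ a b, H.Adj a b) :
    vNumber (edgeIdeal K (graphJoin G H)) =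
      min (vNumber (edgeIdeal K G)) (vNumber (edgeIdeal K H)) := by
  classical
  obtain ⟨a₁, b₁, hab₁⟩ := hG
  haveI : Nonempty (α ⊕ β) := ⟨Sum.inl a₁⟩
  have hG : ∃ a b, G.Adj a b := ⟨a₁, b₁, hab₁⟩
  have huL : Function.Injective (Sum.inl : α → α ⊕ β) := Sum.inl_injective
  have huR : Function.Injective (Sum.inr : β → α ⊕ β) := Sum.inr_injective
  have hAdjFL : ∀ i j, G.Adj i j → (graphJoin G H).Adj (Sum.inl i) (Sum.inl j) :=
    fun i j h => adj_inl_inl.2 h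
  have hAdjBL : ∀ i j, (graphJoin G H).Adj (Sum.inl i) (Sum.inl j) → G.Adj i j :=
    fun i j h => adj_inl_inl.1 h
  have hcrossL : ∀ v, v ∉ Set.range (Sum.inl : α → α ⊕ β) →
      ∀ i, (graphJoin G H).Adj v (Sum.inl i) := by
    rintro (a | b) hv i
    · exact absurd ⟨a, rfl⟩ hv
    · exact (adj_inl_inr i b).symm
  have hAdjFR : ∀ i j, H.Adj i j → (graphJoin G H).Adj (Sum.inr i) (Sum.inr j) :=
    fun i j h => adj_inr_inr.2 h
  have hAdjBR : ∀ i j, (graphJoin G H).Adj (Sum.inr i) (Sum.inr j) → H.Adj i j :=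
    fun i j h => adj_inr_inr.1 h
  have hcrossR : ∀ v, v ∉ Set.range (Sum.inr : β → α ⊕ β) →
      ∀ i, (graphJoin G H).Adj v (Sum.inr i) := by
    rintro (a | b) hv i
    · exact adj_inl_inr a i
    · exact absurd ⟨b, rfl⟩ hv
  have hSG := vSet_nonempty (K := K) G
  have hSH := vSet_nonempty (K := K) H
  have hSD := vSet_nonempty (K := K) (graphJoin G H)
  refine le_antisymm (le_min ?_ ?_) ?_
  · exact Nat.sInf_le (masterU huL hAdjFL hAdjBL hcrossL hG (Nat.sInf_mem hSG))
  · exact Nat.sInf_le (masterU huR hAdjFR hAdjBR hcrossR hH (Nat.sInf_mem hSH))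
  · obtain ⟨F, hF, hassoc⟩ := Nat.sInf_mem hSD
    have hQ : (Submodule.colon (edgeIdeal K (graphJoin G H)) (Ideal.span {F})).IsPrime :=
      hassoc.1
    have hFI : F ∉ edgeIdeal K (graphJoin G H) := notMem_of_colon_isPrime hQ
    obtain ⟨v, hv⟩ := exists_X_mul_notMem hFI
    have hvQ : X v ∉ Submodule.colon (edgeIdeal K (graphJoin G H)) (Ideal.span {F}) := by
      intro hmem
      rw [Ideal.mem_colon_span_singleton] at hmem
      exact hv hmem
    cases v with
    | inl a₀ =>
        have hk := masterL huL hAdjFL hAdjBL hcrossL hF hassoc ⟨a₀, hvQ⟩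
        exact le_trans (min_le_left _ _) (Nat.sInf_le hk)
    | inr b₀ =>
        have hk := masterL huR hAdjFR hAdjBR hcrossR hF hassoc ⟨b₀, hvQ⟩
        exact le_trans (min_le_right _ _) (Nat.sInf_le hk)
end
end

section
/- For every n ≥ 5, the v-numbers of the cycle C_n and the path P_{n−3} satisfy v(C_n) = v(P_{n−3}) + 1. -/
open MvPolynomial

noncomputable section

namespace VAux

variable {K : Type*} [Field K] {V : Type*}

open Classical in
/-- The algebra map killing the variables in `s`. -/
def kill (s : Set V) : MvPolynomial V K →ₐ[K] MvPolynomial V K :=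
  aeval (fun i => if i ∈ s then 0 else X i)

open Classical in
lemma kill_coeff (s : Set V) (p : MvPolynomial V K) (m : V →₀ ℕ) :
    coeff m (kill s p) = if ∀ i ∈ m.support, i ∉ s then coeff m p else 0 := by
  classical
  rw [kill, aeval_def, eval₂_eq]
  have hterm : ∀ d : V →₀ ℕ,
      (algebraMap K (MvPolynomial V K)) (coeff d p) *
        ∏ i ∈ d.support, (if i ∈ s then (0 : MvPolynomial V K) else X i) ^ d i
      = if ∀ i ∈ d.support, i ∉ s then monomial d (coeff d p) else 0 := by
    intro d
    by_cases hd : ∀ i ∈ d.support, i ∉ s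
    · rw [if_pos hd]
      have h2 : ∀ i ∈ d.support,
          (if i ∈ s then (0 : MvPolynomial V K) else X i) ^ d i = X i ^ d i := by
        intro i hi; rw [if_neg (hd i hi)]
      rw [Finset.prod_congr rfl h2, prod_X_pow_eq_monomial, algebraMap_eq, C_mul_monomial,
        mul_one]
    · rw [if_neg hd]
      push_neg at hd
      obtain ⟨i, hi, his⟩ := hd
      have hz : (if i ∈ s then (0 : MvPolynomial V K) else X i) ^ d i = 0 := by
        rw [if_pos his, zero_pow (Finsupp.mem_support_iff.mp hi)]
      rw [Finset.prod_eq_zero hi hz, mul_zero]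
  rw [Finset.sum_congr rfl (fun d _ => hterm d), coeff_sum]
  have h3 : ∀ d ∈ p.support,
      coeff m (if ∀ i ∈ d.support, i ∉ s then monomial d (coeff d p) else 0)
      = if d = m then (if ∀ i ∈ m.support, i ∉ s then coeff m p else 0) else 0 := by
    intro d _
    by_cases hdm : d = m
    · subst hdm
      by_cases h : ∀ i ∈ d.support, i ∉ s
      · rw [if_pos h, if_pos rfl, if_pos h, coeff_monomial, if_pos rfl]
      · rw [if_neg h, if_pos rfl, if_neg h, coeff_zero]
    · by_cases h : ∀ i ∈ d.support, i ∉ s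
      · rw [if_pos h, coeff_monomial, if_neg hdm, if_neg hdm]
      · rw [if_neg h, coeff_zero, if_neg hdm]
  rw [Finset.sum_congr rfl h3, Finset.sum_ite_eq' p.support m]
  by_cases hm : m ∈ p.support
  · rw [if_pos hm]
  · rw [if_neg hm]
    have h0 : coeff m p = 0 := by rwa [← notMem_support_iff]
    rw [h0]
    split <;> rfl

lemma mem_span_X_iff_kill_eq_zero (s : Set V) (p : MvPolynomial V K) :
    p ∈ Ideal.span (X '' s : Set (MvPolynomial V K)) ↔ kill s p = 0 := by
  classical
  rw [mem_ideal_span_X_image]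
  constructor
  · intro h
    ext m
    rw [kill_coeff, coeff_zero]
    by_cases hm : ∀ i ∈ m.support, i ∉ s
    · rw [if_pos hm]
      by_contra hc
      obtain ⟨i, his, hmi⟩ := h m (mem_support_iff.mpr hc)
      exact hm i (Finsupp.mem_support_iff.mpr hmi) his
    · rw [if_neg hm]
  · intro h m hm
    have hc := congrArg (coeff m) h
    rw [kill_coeff, coeff_zero] at hc
    by_cases hcc : ∀ i ∈ m.support, i ∉ s
    · rw [if_pos hcc] at hc
      exact absurd hc (mem_support_iff.mp hm)
    · push_neg at hcc
      obtain ⟨i, hi, his⟩ := hcc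
      exact ⟨i, his, Finsupp.mem_support_iff.mp hi⟩

lemma isPrime_span_X_image (s : Set V) :
    (Ideal.span (X '' s : Set (MvPolynomial V K))).IsPrime := by
  constructor
  · intro h
    have h1 : (1 : MvPolynomial V K) ∈ Ideal.span (X '' s : Set (MvPolynomial V K)) := by
      rw [h]; exact Submodule.mem_top
    rw [mem_span_X_iff_kill_eq_zero, map_one] at h1
    exact one_ne_zero h1
  · intro x y hxy
    rw [mem_span_X_iff_kill_eq_zero, map_mul] at hxy
    rcases mul_eq_zero.mp hxy with h | h
    · exact Or.inl ((mem_span_X_iff_kill_eq_zero s x).mpr h)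
    · exact Or.inr ((mem_span_X_iff_kill_eq_zero s y).mpr h)

lemma colon_eq_annihilator (I : Ideal (MvPolynomial V K)) (f : MvPolynomial V K) :
    Submodule.colon I (Ideal.span {f}) =
      (Submodule.span (MvPolynomial V K)
        {(Ideal.Quotient.mk I f : MvPolynomial V K ⧸ I)}).annihilator := by
  ext r
  rw [show (Ideal.span {f} : Submodule (MvPolynomial V K) (MvPolynomial V K))
      = Submodule.span (MvPolynomial V K) {f} from rfl]
  rw [Submodule.mem_colon_span_singleton, Submodule.mem_annihilator_span_singleton,
    ← Ideal.Quotient.mk_eq_mk, ← Submodule.Quotient.mk_smul, Submodule.Quotient.mk_eq_zero]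

lemma colon_mem_associatedPrimes_iff (I : Ideal (MvPolynomial V K)) (f : MvPolynomial V K) :
    Submodule.colon I (Ideal.span {f}) ∈
        associatedPrimes (MvPolynomial V K) (MvPolynomial V K ⧸ I) ↔
      (Submodule.colon I (Ideal.span {f})).IsPrime := by
  constructor
  · exact fun h => h.1
  · intro h
    exact ⟨h, Ideal.Quotient.mk I f, by rw [Submodule.bot_colon', ← colon_eq_annihilator, h.radical]⟩

lemma pair_le_iff [DecidableEq V] {i j : V} (hij : i ≠ j) (m : V →₀ ℕ) :
    Finsupp.single i 1 + Finsupp.single j 1 ≤ m ↔ 1 ≤ m i ∧ 1 ≤ m j := by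
  rw [Finsupp.le_def]
  constructor
  · intro h
    constructor
    · have hi := h i
      rw [Finsupp.add_apply, Finsupp.single_eq_same,
        Finsupp.single_eq_of_ne' (Ne.symm hij)] at hi
      omega
    · have hj := h j
      rw [Finsupp.add_apply, Finsupp.single_eq_same, Finsupp.single_eq_of_ne' hij] at hj
      omega
  · rintro ⟨h1, h2⟩ s
    rw [Finsupp.add_apply]
    by_cases hsi : s = i
    · subst hsi
      rw [Finsupp.single_eq_same, Finsupp.single_eq_of_ne' (Ne.symm hij)]
      omega
    · rw [Finsupp.single_eq_of_ne' (fun he => hsi he.symm)]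
      by_cases hsj : s = j
      · subst hsj
        rw [Finsupp.single_eq_same]
        omega
      · rw [Finsupp.single_eq_of_ne' (fun he => hsj he.symm)]
        omega

lemma mem_edgeIdeal_iff [DecidableEq V] (G : SimpleGraph V) (p : MvPolynomial V K) :
    p ∈ edgeIdeal K G ↔ ∀ m ∈ p.support, ∃ i j, G.Adj i j ∧
      Finsupp.single i 1 + Finsupp.single j 1 ≤ m := by
  have hXX : ∀ i j : V, (X i : MvPolynomial V K) * X j
      = monomial (Finsupp.single i 1 + Finsupp.single j 1) 1 := by
    intro i j
    rw [X, X, monomial_mul, mul_one]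
  have hspan : edgeIdeal K G = Ideal.span ((fun a => monomial a (1 : K)) ''
      {a | ∃ i j, G.Adj i j ∧ a = Finsupp.single i 1 + Finsupp.single j 1}) := by
    unfold edgeIdeal
    congr 1
    ext q
    constructor
    · rintro ⟨i, j, hij, rfl⟩
      exact ⟨_, ⟨i, j, hij, rfl⟩, (hXX i j).symm⟩
    · rintro ⟨a, ⟨i, j, hij, rfl⟩, rfl⟩
      exact ⟨i, j, hij, (hXX i j).symm⟩
  rw [hspan, mem_ideal_span_monomial_image]
  constructor
  · intro h m hm
    obtain ⟨a, ⟨i, j, hij, rfl⟩, hle⟩ := h m hm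
    exact ⟨i, j, hij, hle⟩
  · intro h m hm
    obtain ⟨i, j, hij, hle⟩ := h m hm
    exact ⟨_, ⟨i, j, hij, rfl⟩, hle⟩

lemma vNumber_eq (I : Ideal (MvPolynomial V K)) (v : ℕ)
    (hup : ∃ f : MvPolynomial V K, f.IsHomogeneous v ∧
      Submodule.colon I (Ideal.span {f}) ∈
        associatedPrimes (MvPolynomial V K) (MvPolynomial V K ⧸ I))
    (hlow : ∀ (k : ℕ) (f : MvPolynomial V K), f.IsHomogeneous k →
      Submodule.colon I (Ideal.span {f}) ∈
        associatedPrimes (MvPolynomial V K) (MvPolynomial V K ⧸ I) → v ≤ k) :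
    vNumber I = v := by
  apply le_antisymm
  · exact Nat.sInf_le hup
  · exact le_csInf ⟨v, hup⟩ (fun k hk => by
      obtain ⟨f, h1, h2⟩ := hk
      exact hlow k f h1 h2)

lemma up [DecidableEq V] (G : SimpleGraph V) (A : Finset V)
    (hcov : ∀ i j, G.Adj i j → ∃ b ∈ A, G.Adj b i ∨ G.Adj b j)
    (hind : ∀ i ∈ A, ∀ j ∈ A, ¬ G.Adj i j) :
    ∃ f : MvPolynomial V K, f.IsHomogeneous A.card ∧
      Submodule.colon (edgeIdeal K G) (Ideal.span {f}) ∈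
        associatedPrimes (MvPolynomial V K) (MvPolynomial V K ⧸ edgeIdeal K G) := by
  set aA : V →₀ ℕ := Finsupp.indicator A (fun _ _ => 1) with haA
  have haA_apply : ∀ v, aA v = if v ∈ A then 1 else 0 := by
    intro v
    rw [haA, Finsupp.indicator_apply]
    split <;> rfl
  have hsupp : aA.support = A := by
    ext v
    rw [Finsupp.mem_support_iff, haA_apply]
    by_cases hv : v ∈ A <;> simp [hv]
  refine ⟨monomial aA 1, ?_, ?_⟩
  · apply isHomogeneous_monomial
    rw [Finsupp.degree_apply]
    rw [hsupp]
    rw [Finset.sum_congr rfl (fun v hv => by rw [haA_apply, if_pos hv])]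
    simp
  · rw [colon_mem_associatedPrimes_iff]
    have hc : Submodule.colon (edgeIdeal K G) (Ideal.span {monomial aA (1:K)}) =
        Ideal.span (X '' {v | ∃ b ∈ A, G.Adj b v} : Set (MvPolynomial V K)) := by
      ext g
      rw [show (Ideal.span {monomial aA (1:K)} :
            Submodule (MvPolynomial V K) (MvPolynomial V K))
          = Submodule.span (MvPolynomial V K) {monomial aA 1} from rfl,
        Submodule.mem_colon_span_singleton, smul_eq_mul, mem_edgeIdeal_iff,
        mem_ideal_span_X_image]
      constructor
      · intro h b hb
        have hmemsup : b + aA ∈ (g * monomial aA (1:K)).support := by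
          rw [mem_support_iff, coeff_mul_monomial, mul_one]
          exact mem_support_iff.mp hb
        obtain ⟨i, j, hij, hle⟩ := h _ hmemsup
        rw [pair_le_iff hij.ne] at hle
        obtain ⟨h1, h2⟩ := hle
        rw [Finsupp.add_apply, haA_apply] at h1 h2
        by_cases hiA : i ∈ A
        · have hjA : j ∉ A := fun hjA => hind i hiA j hjA hij
          rw [if_neg hjA] at h2
          exact ⟨j, ⟨i, hiA, hij⟩, by omega⟩
        · rw [if_neg hiA] at h1
          by_cases hjA : j ∈ A
          · exact ⟨i, ⟨j, hjA, hij.symm⟩, by omega⟩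
          · rw [if_neg hjA] at h2
            obtain ⟨b', hb'A, hadj⟩ := hcov i j hij
            rcases hadj with hbi | hbj
            · exact ⟨i, ⟨b', hb'A, hbi⟩, by omega⟩
            · exact ⟨j, ⟨b', hb'A, hbj⟩, by omega⟩
      · intro h m hm
        rw [mem_support_iff, coeff_mul_monomial', mul_one] at hm
        by_cases hle : aA ≤ m
        · rw [if_pos hle] at hm
          obtain ⟨v, ⟨b', hb'A, hadj⟩, hbv⟩ := h (m - aA) (mem_support_iff.mpr hm)
          refine ⟨b', v, hadj, ?_⟩
          rw [pair_le_iff hadj.ne]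
          constructor
          · have := Finsupp.le_def.mp hle b'
            rw [haA_apply, if_pos hb'A] at this
            omega
          · have h1 := Finsupp.le_def.mp hle v
            have h2 : (m - aA) v = m v - aA v := Finsupp.tsub_apply m aA v
            omega
        · rw [if_neg hle] at hm
          exact absurd rfl hm
    rw [hc]
    exact isPrime_span_X_image _

lemma down [DecidableEq V] (G : SimpleGraph V) (k : ℕ) (f : MvPolynomial V K)
    (hf : f.IsHomogeneous k)
    (hprime : (Submodule.colon (edgeIdeal K G) (Ideal.span {f})).IsPrime) :
    ∃ B : Finset V, B.card ≤ k ∧ ∀ i j, G.Adj i j → ∃ b ∈ B, G.Adj b i ∨ G.Adj b j := by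
  classical
  set I := edgeIdeal K G with hI
  have hcolon_mem : ∀ g : MvPolynomial V K,
      g ∈ Submodule.colon I (Ideal.span {f}) ↔ g * f ∈ I := by
    intro g
    rw [show (Ideal.span {f} : Submodule (MvPolynomial V K) (MvPolynomial V K))
        = Submodule.span (MvPolynomial V K) {f} from rfl,
      Submodule.mem_colon_span_singleton, smul_eq_mul]
  have hfI : f ∉ I := by
    intro hfmem
    apply hprime.ne_top
    rw [eq_top_iff]
    intro g _
    rw [hcolon_mem]
    exact Ideal.mul_mem_left I g hfmem
  have hex : ∃ a ∈ f.support, (monomial a (1:K)) ∉ I := by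
    by_contra hcon
    push_neg at hcon
    apply hfI
    rw [f.as_sum]
    apply Ideal.sum_mem
    intro a ha
    have h5 : monomial a (coeff a f) = (C (coeff a f)) * monomial a 1 := by
      rw [C_mul_monomial, mul_one]
    rw [h5]
    exact Ideal.mul_mem_left _ _ (hcon a ha)
  obtain ⟨a, haf, haI⟩ := hex
  have key : ∀ w, X w ∈ Submodule.colon I (Ideal.span {f}) → ∃ b ∈ a.support, G.Adj b w := by
    intro w hXw
    have hXf : X w * f ∈ I := (hcolon_mem _).mp hXw
    have hsup : a + Finsupp.single w 1 ∈ (X w * f).support := by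
      rw [mem_support_iff, X, mul_comm, coeff_mul_monomial, mul_one]
      exact mem_support_iff.mp haf
    obtain ⟨u, v, huv, hle⟩ := (mem_edgeIdeal_iff G _).mp hXf _ hsup
    rw [pair_le_iff huv.ne] at hle
    obtain ⟨hu, hv⟩ := hle
    have hcase : ∀ x : V, 1 ≤ (a + Finsupp.single w 1 : V →₀ ℕ) x → x = w ∨ x ∈ a.support := by
      intro x hx
      rw [Finsupp.add_apply, Finsupp.single_apply] at hx
      by_cases hxw : w = x
      · exact Or.inl hxw.symm
      · rw [if_neg hxw] at hx
        exact Or.inr (Finsupp.mem_support_iff.mpr (by omega))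
    rcases hcase u hu with huw | huA
    · rcases hcase v hv with hvw | hvA
      · exact absurd (huw.trans hvw.symm) huv.ne
      · subst huw
        exact ⟨v, hvA, huv.symm⟩
    · rcases hcase v hv with hvw | hvA
      · subst hvw
        exact ⟨u, huA, huv⟩
      · exfalso
        apply haI
        rw [mem_edgeIdeal_iff]
        intro m hm
        rw [support_monomial, if_neg (one_ne_zero)] at hm
        rw [Finset.mem_singleton] at hm
        subst hm
        refine ⟨u, v, huv, ?_⟩
        rw [pair_le_iff huv.ne]
        exact ⟨Nat.one_le_iff_ne_zero.mpr (Finsupp.mem_support_iff.mp huA),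
          Nat.one_le_iff_ne_zero.mpr (Finsupp.mem_support_iff.mp hvA)⟩
  refine ⟨a.support, ?_, ?_⟩
  · have hdeg : a.degree = k := by
      have h1 : (Finsupp.weight 1) a = k := hf (mem_support_iff.mp haf)
      rw [Finsupp.degree_eq_weight_one]
      exact h1
    calc a.support.card = ∑ _i ∈ a.support, 1 := by simp
      _ ≤ ∑ i ∈ a.support, a i :=
          Finset.sum_le_sum (fun i hi =>
            Nat.one_le_iff_ne_zero.mpr (Finsupp.mem_support_iff.mp hi))
      _ = a.degree := rfl
      _ = k := hdeg
  · intro i j hij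
    have hXX : (X i : MvPolynomial V K) * X j ∈ I := Ideal.subset_span ⟨i, j, hij, rfl⟩
    have hIP : I ≤ Submodule.colon I (Ideal.span {f}) := by
      intro g hg
      rw [hcolon_mem]
      exact Ideal.mul_mem_right f I hg
    rcases hprime.mem_or_mem (hIP hXX) with hXi | hXj
    · obtain ⟨b, hb, hadj⟩ := key i hXi
      exact ⟨b, hb, Or.inl hadj⟩
    · obtain ⟨b, hb, hadj⟩ := key j hXj
      exact ⟨b, hb, Or.inr hadj⟩

end VAux

namespace VAux2

lemma val_one' (m : ℕ) : (1 : Fin (m+5)).val = 1 := Fin.val_one _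

lemma val_two' (m : ℕ) : (2 : Fin (m+5)).val = 2 := by
  have h : (2 : Fin (m+5)).val = 2 % (m+5) := rfl
  rw [h, Nat.mod_eq_of_lt (by omega)]

lemma val_sub' (m : ℕ) (x y : Fin (m+5)) :
    (x - y).val + y.val = x.val ∨ (x - y).val + y.val = m + 5 + x.val := by
  have hx := x.isLt
  have hy := y.isLt
  have key : ((m+5) - y.val + x.val) % (m+5) =
      if y.val ≤ x.val then x.val - y.val else (m+5) + x.val - y.val := by
    split
    · next h =>
      have h1 : m + 5 - y.val + x.val = (m+5) + (x.val - y.val) := by omega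
      rw [h1, Nat.add_mod_left]
      exact Nat.mod_eq_of_lt (by omega)
    · next h =>
      rw [Nat.mod_eq_of_lt (show m + 5 - y.val + x.val < m + 5 by omega)]
      omega
  have h2 : (x - y).val = ((m+5) - y.val + x.val) % (m+5) := by
    rw [Fin.sub_def]
  rw [h2, key]
  split <;> omega

lemma val_add' (m : ℕ) (x y : Fin (m+5)) :
    (x + y).val = x.val + y.val ∨ (x + y).val + (m + 5) = x.val + y.val := by
  have hx := x.isLt
  have hy := y.isLt
  have h : (x + y).val = (x.val + y.val) % (m+5) := Fin.val_add x y
  rcases Nat.lt_or_ge (x.val + y.val) (m+5) with hlt | hge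
  · rw [Nat.mod_eq_of_lt hlt] at h
    exact Or.inl h
  · have h2 : (x.val + y.val) % (m+5) = x.val + y.val - (m+5) := by
      rw [Nat.mod_eq_sub_mod hge, Nat.mod_eq_of_lt (by omega)]
    rw [h2] at h
    omega

lemma cycle_adj_iff (m : ℕ) (x y : Fin (m+5)) :
    (SimpleGraph.cycleGraph (m+5)).Adj x y ↔
      (x.val + 1 = y.val ∨ y.val + 1 = x.val ∨ (x.val = 0 ∧ y.val = m+4) ∨
        (y.val = 0 ∧ x.val = m+4)) := by
  have hx := x.isLt
  have hy := y.isLt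
  have h3 := (x - y).isLt
  have h4 := (y - x).isLt
  rw [SimpleGraph.cycleGraph_adj']
  rcases val_sub' m x y with h1 | h1 <;> rcases val_sub' m y x with h2 | h2 <;>
    (generalize hgx : (x - y).val = u at h1 h3 ⊢
     generalize hgy : (y - x).val = v at h2 h4 ⊢
     omega)

lemma cycle_count (m : ℕ) (k : ℕ) (B : Finset (Fin (m+5))) (hcard : B.card ≤ k)
    (hcov : ∀ i j, (SimpleGraph.cycleGraph (m+5)).Adj i j →
      ∃ b ∈ B, (SimpleGraph.cycleGraph (m+5)).Adj b i ∨ (SimpleGraph.cycleGraph (m+5)).Adj b j) :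
    m + 5 ≤ 4 * k := by
  classical
  have hsub : (Finset.univ : Finset (Fin (m+5))) ⊆
      B.biUnion (fun b => {b - 1, b + 1, b - 2, b}) := by
    intro t _
    have htv := t.isLt
    have ht1lt := (t + 1).isLt
    have hv1 := val_one' m
    have hadj : (SimpleGraph.cycleGraph (m+5)).Adj t (t+1) := by
      rw [cycle_adj_iff]
      rcases val_add' m t 1 with h | h <;> rw [hv1] at h <;>
        (generalize hz : (t + 1 : Fin (m+5)).val = z at h ht1lt ⊢
         omega)
    obtain ⟨b, hb, hadj'⟩ := hcov t (t+1) hadj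
    rw [Finset.mem_biUnion]
    refine ⟨b, hb, ?_⟩
    simp only [Finset.mem_insert, Finset.mem_singleton]
    have hbv := b.isLt
    have hl1 := (b - 1).isLt
    have hl2 := (b - 2).isLt
    have hl3 := (b + 1).isLt
    have hv2 := val_two' m
    have ht1' : (t + 1 : Fin (m+5)).val = t.val + 1 ∨ (t + 1 : Fin (m+5)).val + (m+5) = t.val + 1 := by
      rcases val_add' m t 1 with h | h <;> rw [hv1] at h
      · exact Or.inl h
      · exact Or.inr h
    have hb1' : (b - 1 : Fin (m+5)).val + 1 = b.val ∨ (b - 1 : Fin (m+5)).val + 1 = m + 5 + b.val := by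
      rcases val_sub' m b 1 with h | h <;> rw [hv1] at h
      · exact Or.inl h
      · exact Or.inr h
    have hb2' : (b - 2 : Fin (m+5)).val + 2 = b.val ∨ (b - 2 : Fin (m+5)).val + 2 = m + 5 + b.val := by
      rcases val_sub' m b 2 with h | h <;> rw [hv2] at h
      · exact Or.inl h
      · exact Or.inr h
    have hbp1' : (b + 1 : Fin (m+5)).val = b.val + 1 ∨ (b + 1 : Fin (m+5)).val + (m+5) = b.val + 1 := by
      rcases val_add' m b 1 with h | h <;> rw [hv1] at h
      · exact Or.inl h
      · exact Or.inr h
    have hvals : t.val = (b - 1 : Fin (m+5)).val ∨ t.val = (b + 1 : Fin (m+5)).val ∨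
        t.val = (b - 2 : Fin (m+5)).val ∨ t.val = b.val := by
      rcases hadj' with h | h <;> rw [cycle_adj_iff] at h
      · generalize hg1 : (b - 1 : Fin (m+5)).val = w1 at hb1' hl1 ⊢
        generalize hg2 : (b - 2 : Fin (m+5)).val = w2 at hb2' hl2 ⊢
        generalize hg3 : (b + 1 : Fin (m+5)).val = w3 at hbp1' hl3 ⊢
        omega
      · generalize hg1 : (b - 1 : Fin (m+5)).val = w1 at hb1' hl1 ⊢
        generalize hg2 : (b - 2 : Fin (m+5)).val = w2 at hb2' hl2 ⊢
        generalize hg3 : (b + 1 : Fin (m+5)).val = w3 at hbp1' hl3 ⊢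
        generalize hg4 : (t + 1 : Fin (m+5)).val = w4 at ht1' h
        omega
    rcases hvals with h | h | h | h
    · exact Or.inl (Fin.ext h)
    · exact Or.inr (Or.inl (Fin.ext h))
    · exact Or.inr (Or.inr (Or.inl (Fin.ext h)))
    · exact Or.inr (Or.inr (Or.inr (Fin.ext h)))
  have h2 : (Finset.univ : Finset (Fin (m+5))).card = m + 5 := by simp
  have h3 := Finset.card_le_card hsub
  have h4 := Finset.card_biUnion_le (s := B)
    (t := fun b => ({b - 1, b + 1, b - 2, b} : Finset (Fin (m+5))))
  have h5 : ∀ b : Fin (m+5), ({b - 1, b + 1, b - 2, b} : Finset (Fin (m+5))).card ≤ 4 := by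
    intro b
    apply le_trans (Finset.card_insert_le _ _)
    have g1 := Finset.card_insert_le (b+1) ({b - 2, b} : Finset (Fin (m+5)))
    have g2 := Finset.card_insert_le (b-2) ({b} : Finset (Fin (m+5)))
    have g3 : ({b} : Finset (Fin (m+5))).card = 1 := Finset.card_singleton b
    omega
  have h6 : ∑ b ∈ B, ({b - 1, b + 1, b - 2, b} : Finset (Fin (m+5))).card ≤ 4 * B.card := by
    calc ∑ b ∈ B, ({b - 1, b + 1, b - 2, b} : Finset (Fin (m+5))).card
        ≤ ∑ _b ∈ B, 4 := Finset.sum_le_sum (fun b _ => h5 b)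
      _ = 4 * B.card := by rw [Finset.sum_const, smul_eq_mul, mul_comm]
  omega

lemma path_count (m : ℕ) (k : ℕ) (B : Finset (Fin (m+2))) (hcard : B.card ≤ k)
    (hcov : ∀ i j, (SimpleGraph.pathGraph (m+2)).Adj i j →
      ∃ b ∈ B, (SimpleGraph.pathGraph (m+2)).Adj b i ∨ (SimpleGraph.pathGraph (m+2)).Adj b j) :
    m + 1 ≤ 4 * k := by
  classical
  have hsub : (Finset.range (m+1)).image (· + 2) ⊆
      B.biUnion (fun b => ({b.val, b.val + 1, b.val + 2, b.val + 3} : Finset ℕ)) := by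
    intro x hx
    rw [Finset.mem_image] at hx
    obtain ⟨c, hc, rfl⟩ := hx
    rw [Finset.mem_range] at hc
    have hadj : (SimpleGraph.pathGraph (m+2)).Adj ⟨c, by omega⟩ ⟨c+1, by omega⟩ := by
      rw [SimpleGraph.pathGraph_adj]
      exact Or.inl rfl
    obtain ⟨b, hb, hadj'⟩ := hcov _ _ hadj
    rw [Finset.mem_biUnion]
    refine ⟨b, hb, ?_⟩
    simp only [Finset.mem_insert, Finset.mem_singleton]
    rcases hadj' with h | h <;> rw [SimpleGraph.pathGraph_adj] at h <;>
      simp only [] at h <;> omega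
  have h2 : ((Finset.range (m+1)).image (· + 2)).card = m + 1 := by
    rw [Finset.card_image_of_injective _ (add_left_injective 2), Finset.card_range]
  have h3 := Finset.card_le_card hsub
  have h4 := Finset.card_biUnion_le (s := B)
    (t := fun b => ({b.val, b.val + 1, b.val + 2, b.val + 3} : Finset ℕ))
  have h5 : ∀ b : Fin (m+2), ({b.val, b.val + 1, b.val + 2, b.val + 3} : Finset ℕ).card ≤ 4 := by
    intro b
    apply le_trans (Finset.card_insert_le _ _)
    have g1 := Finset.card_insert_le (b.val+1) ({b.val + 2, b.val + 3} : Finset ℕ)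
    have g2 := Finset.card_insert_le (b.val+2) ({b.val + 3} : Finset ℕ)
    have g3 : ({b.val + 3} : Finset ℕ).card = 1 := Finset.card_singleton _
    omega
  have h6 : ∑ b ∈ B, ({b.val, b.val + 1, b.val + 2, b.val + 3} : Finset ℕ).card ≤ 4 * B.card := by
    calc ∑ b ∈ B, ({b.val, b.val + 1, b.val + 2, b.val + 3} : Finset ℕ).card
        ≤ ∑ _b ∈ B, 4 := Finset.sum_le_sum (fun b _ => h5 b)
      _ = 4 * B.card := by rw [Finset.sum_const, smul_eq_mul, mul_comm]
  omega


lemma cycle_construct (m : ℕ) :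
    ∃ A : Finset (Fin (m+5)), A.card = (m + 8) / 4 ∧
      (∀ i ∈ A, ∀ j ∈ A, ¬ (SimpleGraph.cycleGraph (m+5)).Adj i j) ∧
      (∀ i j, (SimpleGraph.cycleGraph (m+5)).Adj i j →
        ∃ b ∈ A, (SimpleGraph.cycleGraph (m+5)).Adj b i ∨
          (SimpleGraph.cycleGraph (m+5)).Adj b j) := by
  classical
  refine ⟨(Finset.range ((m + 8) / 4)).image
    (fun j => (⟨min (4*j) (m+3), by omega⟩ : Fin (m+5))), ?_, ?_, ?_⟩
  · have hinj : Set.InjOn (fun j => (⟨min (4*j) (m+3), by omega⟩ : Fin (m+5)))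
        ↑(Finset.range ((m + 8) / 4)) := by
      intro j1 h1 j2 h2 heq
      rw [Finset.coe_range, Set.mem_Iio] at h1 h2
      have hv := congrArg Fin.val heq
      simp only [] at hv
      omega
    rw [Finset.card_image_of_injOn hinj, Finset.card_range]
  · intro i hi j hj hadj
    rw [Finset.mem_image] at hi hj
    obtain ⟨j1, hj1, rfl⟩ := hi
    obtain ⟨j2, hj2, rfl⟩ := hj
    rw [Finset.mem_range] at hj1 hj2
    rw [cycle_adj_iff] at hadj
    simp only [] at hadj
    omega
  · intro i j hadj
    rw [cycle_adj_iff] at hadj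
    have hmem : ∀ jx : ℕ, jx < (m + 8) / 4 →
        (⟨min (4*jx) (m+3), by omega⟩ : Fin (m+5)) ∈ (Finset.range ((m + 8) / 4)).image
          (fun j => (⟨min (4*j) (m+3), by omega⟩ : Fin (m+5))) := by
      intro jx hjx
      rw [Finset.mem_image]
      exact ⟨jx, Finset.mem_range.mpr hjx, rfl⟩
    have main : ∀ s t : Fin (m+5), (s.val + 1 = t.val ∨ (t.val = 0 ∧ s.val = m + 4)) →
        ∃ b ∈ (Finset.range ((m + 8) / 4)).image
            (fun j => (⟨min (4*j) (m+3), by omega⟩ : Fin (m+5))),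
          ((SimpleGraph.cycleGraph (m+5)).Adj b s ∨ (SimpleGraph.cycleGraph (m+5)).Adj b t) := by
      intro s t hst
      have hs := s.isLt
      have ht := t.isLt
      rcases hst with hst | ⟨ht0, hs4⟩
      · by_cases hbig : m + 3 ≤ s.val
        · refine ⟨_, hmem 0 (by omega), ?_⟩
          rw [cycle_adj_iff, cycle_adj_iff]
          simp only []
          omega
        · refine ⟨_, hmem ((s.val + 2)/4) (by omega), ?_⟩
          rw [cycle_adj_iff, cycle_adj_iff]
          simp only []
          omega
      · refine ⟨_, hmem 0 (by omega), ?_⟩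
        rw [cycle_adj_iff, cycle_adj_iff]
        simp only []
        omega
    rcases hadj with h | h | h | h
    · exact main i j (Or.inl h)
    · obtain ⟨b, hb, hor⟩ := main j i (Or.inl h)
      exact ⟨b, hb, hor.symm⟩
    · obtain ⟨b, hb, hor⟩ := main j i (Or.inr ⟨h.1, h.2⟩)
      exact ⟨b, hb, hor.symm⟩
    · exact main i j (Or.inr ⟨h.1, h.2⟩)

lemma path_construct (m : ℕ) :
    ∃ A : Finset (Fin (m+2)), A.card = (m + 4) / 4 ∧
      (∀ i ∈ A, ∀ j ∈ A, ¬ (SimpleGraph.pathGraph (m+2)).Adj i j) ∧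
      (∀ i j, (SimpleGraph.pathGraph (m+2)).Adj i j →
        ∃ b ∈ A, (SimpleGraph.pathGraph (m+2)).Adj b i ∨
          (SimpleGraph.pathGraph (m+2)).Adj b j) := by
  classical
  refine ⟨(Finset.range ((m + 4) / 4)).image
    (fun j => (⟨min (4*j+2) m, by omega⟩ : Fin (m+2))), ?_, ?_, ?_⟩
  · have hinj : Set.InjOn (fun j => (⟨min (4*j+2) m, by omega⟩ : Fin (m+2)))
        ↑(Finset.range ((m + 4) / 4)) := by
      intro j1 h1 j2 h2 heq
      rw [Finset.coe_range, Set.mem_Iio] at h1 h2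
      have hv := congrArg Fin.val heq
      simp only [] at hv
      omega
    rw [Finset.card_image_of_injOn hinj, Finset.card_range]
  · intro i hi j hj hadj
    rw [Finset.mem_image] at hi hj
    obtain ⟨j1, hj1, rfl⟩ := hi
    obtain ⟨j2, hj2, rfl⟩ := hj
    rw [Finset.mem_range] at hj1 hj2
    rw [SimpleGraph.pathGraph_adj] at hadj
    simp only [] at hadj
    omega
  · intro i j hadj
    rw [SimpleGraph.pathGraph_adj] at hadj
    have hmem : ∀ jx : ℕ, jx < (m + 4) / 4 →
        (⟨min (4*jx+2) m, by omega⟩ : Fin (m+2)) ∈ (Finset.range ((m + 4) / 4)).image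
          (fun j => (⟨min (4*j+2) m, by omega⟩ : Fin (m+2))) := by
      intro jx hjx
      rw [Finset.mem_image]
      exact ⟨jx, Finset.mem_range.mpr hjx, rfl⟩
    have main : ∀ s t : Fin (m+2), s.val + 1 = t.val →
        ∃ b ∈ (Finset.range ((m + 4) / 4)).image
            (fun j => (⟨min (4*j+2) m, by omega⟩ : Fin (m+2))),
          ((SimpleGraph.pathGraph (m+2)).Adj b s ∨ (SimpleGraph.pathGraph (m+2)).Adj b t) := by
      intro s t hst
      have hs := s.isLt
      have ht := t.isLt
      refine ⟨_, hmem (s.val / 4) (by omega), ?_⟩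
      rw [SimpleGraph.pathGraph_adj, SimpleGraph.pathGraph_adj]
      simp only []
      omega
    rcases hadj with h | h
    · exact main i j h
    · obtain ⟨b, hb, hor⟩ := main j i h
      exact ⟨b, hb, hor.symm⟩
end VAux2


lemma vNumber_cycle' (K : Type*) [Field K] (m : ℕ) :
    vNumber (edgeIdeal K (SimpleGraph.cycleGraph (m+5))) = (m + 8) / 4 := by
  obtain ⟨A, hcard, hind, hcov⟩ := VAux2.cycle_construct m
  obtain ⟨f, hf, hass⟩ := VAux.up (K := K) (SimpleGraph.cycleGraph (m+5)) A hcov hind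
  rw [hcard] at hf
  apply VAux.vNumber_eq
  · exact ⟨f, hf, hass⟩
  · intro k g hg hassg
    rw [VAux.colon_mem_associatedPrimes_iff] at hassg
    obtain ⟨B, hB, hBcov⟩ := VAux.down (SimpleGraph.cycleGraph (m+5)) k g hg hassg
    have hcount := VAux2.cycle_count m k B hB hBcov
    omega

lemma vNumber_path' (K : Type*) [Field K] (m : ℕ) :
    vNumber (edgeIdeal K (SimpleGraph.pathGraph (m+2))) = (m + 4) / 4 := by
  obtain ⟨A, hcard, hind, hcov⟩ := VAux2.path_construct m
  obtain ⟨f, hf, hass⟩ := VAux.up (K := K) (SimpleGraph.pathGraph (m+2)) A hcov hind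
  rw [hcard] at hf
  apply VAux.vNumber_eq
  · exact ⟨f, hf, hass⟩
  · intro k g hg hassg
    rw [VAux.colon_mem_associatedPrimes_iff] at hassg
    obtain ⟨B, hB, hBcov⟩ := VAux.down (SimpleGraph.pathGraph (m+2)) k g hg hassg
    have hcount := VAux2.path_count m k B hB hBcov
    omega

/-- for n ≥ 5, v(C_n) = v(P_{n-3}) + 1. -/
theorem vNumber_cycle_eq_vNumber_path {K : Type*} [Field K] (n : ℕ) (hn : 5 ≤ n) :
    vNumber (edgeIdeal K (SimpleGraph.cycleGraph n)) =
      vNumber (edgeIdeal K (SimpleGraph.pathGraph (n - 3))) + 1 := by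
  obtain ⟨m, rfl⟩ : ∃ m, n = m + 5 := ⟨n - 5, by omega⟩
  have h3 : m + 5 - 3 = m + 2 := by omega
  rw [h3, vNumber_cycle' K m, vNumber_path' K m]
  omega
end
end
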